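/- arXiv:1808.01898 — 13 statements merged into one kernel-verified Lean document; each statement's English description precedes it below -/
import Mathlib

section
/- If a sequence (c_n) of positive reals satisfies c_{n+1}/c_n → 1 and there exist n₀ and a > 1/2 with c_{2n}/c_n ≥ a for all n ≥ n₀, then the series ∑ c_n diverges. -/
open Filter Topology

theorem stmt_1 (c : ℕ → ℝ) (hpos : ∀ n, 0 < c n)
    (hratio : Tendsto (fun n => c (n + 1) / c n) atTop (𝓝 1))
    (ha : ∃ (n₀ : ℕ) (a : ℝ), 1 / 2 < a ∧ ∀ n ≥ n₀, a ≤ c (2 * n) / c n) :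
    ¬ Summable c := by
  obtain ⟨n₀, a, ha2, hdb⟩ := ha
  intro hs
  have hapos : (0:ℝ) < a := by linarith
  set ε : ℝ := min (2 - 1/a) (1/2) with hεdef
  have hε0 : 0 < ε := by
    apply lt_min
    · have : 1/a < 2 := by rw [div_lt_iff₀ hapos]; nlinarith
      linarith
    · norm_num
  have hεle : ε ≤ 2 - 1/a := min_le_left _ _
  have hεhalf : ε ≤ 1/2 := min_le_right _ _
  have hkey1 : (1:ℝ) ≤ a * (2 - ε) := by
    have h1 : 1/a ≤ 2 - ε := by linarith
    have : a * (1/a) ≤ a * (2 - ε) := by nlinarith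
    rw [mul_one_div, div_self (ne_of_gt hapos)] at this
    exact this
  have hev : ∀ᶠ n in atTop, 1 - ε ≤ c (n+1) / c n :=
    hratio.eventually_const_le (by linarith)
  obtain ⟨N₁, hN₁⟩ := eventually_atTop.mp hev
  set M : ℕ := max (max n₀ N₁) 1 with hM
  have hM1 : 1 ≤ M := le_max_right _ _
  have hstep : ∀ j, M ≤ j → c j ≤ c (2*j) + c (2*j+1) := by
    intro j hj
    have hjn₀ : n₀ ≤ j := le_trans (le_trans (le_max_left _ _) (le_max_left _ _)) hj
    have hjN₁ : N₁ ≤ 2*j := by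
      have : N₁ ≤ j := le_trans (le_trans (le_max_right _ _) (le_max_left _ _)) hj
      omega
    have h1' : a * c j ≤ c (2*j) := (le_div_iff₀ (hpos j)).mp (hdb j hjn₀)
    have h2' : (1-ε) * c (2*j) ≤ c (2*j+1) := (le_div_iff₀ (hpos (2*j))).mp (hN₁ (2*j) hjN₁)
    have h3 : (2-ε) * (a * c j) ≤ (2-ε) * c (2*j) := by nlinarith
    have h4 : 1 * c j ≤ (a * (2-ε)) * c j := mul_le_mul_of_nonneg_right hkey1 (hpos j).le
    nlinarith
  have hblock : ∀ m n, M ≤ m →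
      ∑ j ∈ Finset.Ico m (m+n), c j ≤ ∑ j ∈ Finset.Ico (2*m) (2*(m+n)), c j := by
    intro m n hm
    induction n with
    | zero => simp
    | succ n ih =>
      have e1 : m + (n+1) = (m+n) + 1 := by ring
      have e2 : 2*(m+(n+1)) = (2*(m+n)+1) + 1 := by ring
      rw [e2, e1, Finset.sum_Ico_succ_top (by omega), Finset.sum_Ico_succ_top (by omega),
        Finset.sum_Ico_succ_top (by omega)]
      have := hstep (m+n) (le_trans hm (Nat.le_add_right m n))
      linarith
  have hS0 : 0 < ∑ j ∈ Finset.Ico M (2*M), c j := by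
    apply Finset.sum_pos (fun i _ => hpos i)
    exact ⟨M, Finset.mem_Ico.mpr ⟨le_refl M, by omega⟩⟩
  have hpow : ∀ k, ∑ j ∈ Finset.Ico M (2*M), c j ≤
      ∑ j ∈ Finset.Ico (2^k*M) (2^(k+1)*M), c j := by
    intro k
    induction k with
    | zero => simp
    | succ k ih =>
      refine le_trans ih ?_
      have hMle : M ≤ 2^k*M := by
        calc M = 1*M := (one_mul M).symm
        _ ≤ 2^k*M := Nat.mul_le_mul_right M (Nat.one_le_two_pow)
      have h := hblock (2^k*M) (2^k*M) hMle
      have e1 : 2^k*M + 2^k*M = 2^(k+1)*M := by ring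
      have e2 : 2*(2^k*M) = 2^(k+1)*M := by ring
      have e3 : 2*(2^(k+1)*M) = 2^(k+1+1)*M := by ring
      rw [e1, e2, e3] at h
      exact h
  rw [summable_iff_vanishing] at hs
  obtain ⟨s, hsv⟩ := hs (Set.Iio (∑ j ∈ Finset.Ico M (2*M), c j)) (Iio_mem_nhds hS0)
  obtain ⟨N, hsN⟩ := s.exists_nat_subset_range
  have hdisj : Disjoint (Finset.Ico (2^N*M) (2^(N+1)*M)) s := by
    rw [Finset.disjoint_left]
    intro x hx hxs
    have hx1 := (Finset.mem_Ico.mp hx).1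
    have hx2 := Finset.mem_range.mp (hsN hxs)
    have : N < 2^N := Nat.lt_two_pow_self
    have : 2^N ≤ 2^N * M := Nat.le_mul_of_pos_right _ (by omega)
    omega
  have := hsv _ hdisj
  rw [Set.mem_Iio] at this
  linarith [hpow N]
end

section
/- If (b_n) is a sequence of positive reals with lim_{n→∞} n·log(b_{n+1}/b_n) = α, then b_n admits the Karamata representation b_n = C(n) · n^α · exp(∑_{k=1}^n δ_k/k), where C(n) converges to a positive constant and δ_n → 0. -/
open Filter Topology

theorem stmt_3 (b : ℕ → ℝ) (hpos : ∀ n, 0 < b n) (α : ℝ)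
    (h : Tendsto (fun n : ℕ => (n : ℝ) * Real.log (b (n + 1) / b n)) atTop (𝓝 α)) :
    ∃ (C : ℕ → ℝ) (δ : ℕ → ℝ) (c : ℝ), 0 < c ∧ Tendsto C atTop (𝓝 c) ∧
      Tendsto δ atTop (𝓝 0) ∧
      ∀ᶠ n in atTop, b n = C n * (n : ℝ) ^ α * Real.exp (∑ k ∈ Finset.Icc 1 n, δ k / k) := by
  set δ : ℕ → ℝ := fun k => (k : ℝ) * Real.log (b (k + 1) / b k) - α with hδ
  set S : ℕ → ℝ := fun n => ∑ k ∈ Finset.Icc 1 n, δ k / k with hS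
  set C : ℕ → ℝ := fun n => b n / ((n : ℝ) ^ α * Real.exp (S n)) with hC
  -- telescoping identity
  have hsum : ∀ n : ℕ, S n = Real.log (b (n + 1)) - Real.log (b 1)
      - α * ∑ k ∈ Finset.Icc 1 n, (1 : ℝ) / k := by
    intro n
    induction n with
    | zero => simp [hS]
    | succ m ih =>
      simp only [hS] at ih ⊢
      rw [Finset.sum_Icc_succ_top (by omega), ih, Finset.sum_Icc_succ_top (by omega)]
      have hm1 : ((m : ℝ) + 1) ≠ 0 := by positivity
      have : δ (m + 1) / (m + 1 : ℕ)
          = Real.log (b (m + 2)) - Real.log (b (m + 1)) - α / (m + 1) := by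
        rw [hδ]
        push_cast
        rw [Real.log_div (hpos _).ne' (hpos _).ne']
        field_simp
      rw [this]
      push_cast
      ring
  -- δ tends to 0
  have hδ0 : Tendsto δ atTop (𝓝 0) := by
    have := h.sub_const α
    simpa [hδ] using this
  -- log (b (n+1) / b n) tends to 0
  have hlog0 : Tendsto (fun n : ℕ => Real.log (b (n + 1) / b n)) atTop (𝓝 0) := by
    have h1 : Tendsto (fun n : ℕ => (1 / (n : ℝ)) * ((n : ℝ) * Real.log (b (n + 1) / b n)))
        atTop (𝓝 (0 * α)) := tendsto_one_div_atTop_nhds_zero_nat.mul h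
    rw [zero_mul] at h1
    refine h1.congr' ?_
    filter_upwards [eventually_ge_atTop 1] with n hn
    have : (n : ℝ) ≠ 0 := Nat.cast_ne_zero.mpr (by omega)
    field_simp
  -- ratio tends to 1
  have hratio : Tendsto (fun n : ℕ => b n / b (n + 1)) atTop (𝓝 1) := by
    have := (Real.continuous_exp.tendsto 0).comp (by simpa using hlog0.neg :
      Tendsto (fun n : ℕ => -Real.log (b (n + 1) / b n)) atTop (𝓝 0))
    rw [Real.exp_zero] at this
    refine this.congr fun n => ?_
    rw [Function.comp_apply, ← Real.log_inv, Real.exp_log (by have := hpos n; have := hpos (n+1); positivity),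
      inv_div]
  -- harmonic minus log tends to γ
  have hharm : Tendsto (fun n : ℕ => (∑ k ∈ Finset.Icc 1 n, (1 : ℝ) / k) - Real.log n)
      atTop (𝓝 Real.eulerMascheroniConstant) := by
    refine Real.tendsto_eulerMascheroniSeq'.congr' ?_
    filter_upwards [eventually_ge_atTop 1] with n hn
    rw [Real.eulerMascheroniSeq', if_neg (by omega)]
    congr 1
    rw [harmonic_eq_sum_Icc]
    push_cast
    simp [one_div]
  -- formula for C on n ≥ 1
  have hCformula : ∀ n : ℕ, 1 ≤ n → C n
      = b 1 * Real.exp (α * ((∑ k ∈ Finset.Icc 1 n, (1 : ℝ) / k) - Real.log n))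
        * (b n / b (n + 1)) := by
    intro n hn
    have hn0 : (0 : ℝ) < n := by exact_mod_cast hn
    have hrpow : (n : ℝ) ^ α = Real.exp (α * Real.log n) := by
      rw [Real.rpow_def_of_pos hn0, mul_comm]
    have hexpS : Real.exp (S n) = b (n + 1) / b 1
        * Real.exp (-(α * ∑ k ∈ Finset.Icc 1 n, (1 : ℝ) / k)) := by
      rw [hsum n, sub_eq_add_neg, sub_eq_add_neg, Real.exp_add, Real.exp_add,
        Real.exp_log (hpos _), Real.exp_neg, Real.exp_log (hpos _)]
      field_simp
    rw [hC]
    simp only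
    rw [hexpS, hrpow]
    rw [mul_sub, Real.exp_sub]
    have e1 := Real.exp_pos (α * Real.log n)
    have e2 := Real.exp_pos (α * ∑ k ∈ Finset.Icc 1 n, (1 : ℝ) / k)
    rw [Real.exp_neg]
    field_simp
  -- C converges
  set c : ℝ := b 1 * Real.exp (α * Real.eulerMascheroniConstant) * 1 with hc
  have hCt : Tendsto C atTop (𝓝 c) := by
    have : Tendsto (fun n : ℕ => b 1 * Real.exp (α *
        ((∑ k ∈ Finset.Icc 1 n, (1 : ℝ) / k) - Real.log n)) * (b n / b (n + 1)))
        atTop (𝓝 c) := by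
      exact (tendsto_const_nhds.mul
        ((Real.continuous_exp.tendsto _).comp (hharm.const_mul α))).mul hratio
    refine this.congr' ?_
    filter_upwards [eventually_ge_atTop 1] with n hn
    exact (hCformula n hn).symm
  refine ⟨C, δ, c, ?_, hCt, hδ0, ?_⟩
  · have := hpos 1; rw [hc]; positivity
  · filter_upwards [eventually_ge_atTop 1] with n hn
    have hn0 : (0 : ℝ) < n := by exact_mod_cast hn
    have hpo : (0 : ℝ) < (n : ℝ) ^ α * Real.exp (S n) :=
      mul_pos (Real.rpow_pos_of_pos hn0 α) (Real.exp_pos _)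
    rw [hC]
    simp only [hS]
    simp only [hS] at hpo
    field_simp
end

section
/- (Raabe's test, convergent case) If (a_n) is a sequence of nonzero reals with lim_{n→∞} n(|a_{n+1}/a_n| − 1) = α and α < −1, then ∑ |a_n| converges, and moreover ∑_{k=n}^∞ |a_k| ∼ n|a_n|/(−1−α) as n → ∞. -/
open Filter Topology

theorem stmt_5 (a : ℕ → ℝ) (hne : ∀ n, a n ≠ 0) (α : ℝ) (hα : α < -1)
    (h : Tendsto (fun n : ℕ => (n : ℝ) * (|a (n + 1) / a n| - 1)) atTop (𝓝 α)) :
    Summable (fun n => |a n|) ∧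
      Tendsto (fun n : ℕ => (∑' k : ℕ, |a (n + k)|) / ((n : ℝ) * |a n| / (-1 - α)))
        atTop (𝓝 1) := by
  set b : ℕ → ℝ := fun n => |a n| with hbdef
  have hbpos : ∀ n, 0 < b n := fun n => abs_pos.mpr (hne n)
  set c : ℝ := -1 - α with hc
  have hcpos : 0 < c := by simp only [hc]; linarith
  set u : ℕ → ℝ := fun n => (n : ℝ) * b n with hudef
  have hupos : ∀ n, 0 ≤ u n := fun n => mul_nonneg (Nat.cast_nonneg n) (hbpos n).le
  -- rewrite hypothesis in terms of b
  have h' : Tendsto (fun n : ℕ => (n : ℝ) * (b (n + 1) / b n - 1)) atTop (𝓝 α) := by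
    have : (fun n : ℕ => (n : ℝ) * (b (n + 1) / b n - 1))
        = fun n : ℕ => (n : ℝ) * (|a (n + 1) / a n| - 1) := by
      funext n; rw [abs_div]
    rw [this]; exact h
  -- ratio tends to 1
  have hr : Tendsto (fun n : ℕ => b (n + 1) / b n) atTop (𝓝 1) := by
    have h1 : Tendsto (fun n : ℕ => b (n + 1) / b n - 1) atTop (𝓝 0) := by
      have hinv : Tendsto (fun n : ℕ => ((n : ℝ))⁻¹) atTop (𝓝 0) :=
        tendsto_inv_atTop_nhds_zero_nat
      have := h'.mul hinv
      rw [mul_zero] at this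
      apply this.congr'
      filter_upwards [eventually_ge_atTop 1] with n hn
      have : (n : ℝ) ≠ 0 := Nat.cast_ne_zero.mpr (by omega)
      field_simp
    have := h1.add_const 1
    simpa using this
  -- the Stolz quotient
  have hD : Tendsto (fun n : ℕ => (u n - u (n + 1)) / b n) atTop (𝓝 c) := by
    have heq : ∀ n : ℕ, (u n - u (n + 1)) / b n
        = -((n : ℝ) * (b (n + 1) / b n - 1)) - b (n + 1) / b n := by
      intro n
      have hbne : b n ≠ 0 := (hbpos n).ne'
      simp only [hudef]
      push_cast
      field_simp
      ring
    have := (h'.neg).sub hr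
    have hlim : -α - 1 = c := by rw [hc]; ring
    rw [hlim] at this
    exact this.congr fun n => (heq n).symm
  -- key eventual bounds
  have key : ∀ ε : ℝ, 0 < ε → ∃ N : ℕ, ∀ k ≥ N,
      (c - ε) * b k ≤ u k - u (k + 1) ∧ u k - u (k + 1) ≤ (c + ε) * b k := by
    intro ε hε
    obtain ⟨N, hN⟩ := (Metric.tendsto_atTop.mp hD) ε hε
    refine ⟨N, fun k hk => ?_⟩
    have hd := hN k hk
    rw [Real.dist_eq, abs_lt] at hd
    have hbne : b k ≠ 0 := (hbpos k).ne'
    have h1 : c - ε < (u k - u (k + 1)) / b k := by linarith [hd.1]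
    have h2 : (u k - u (k + 1)) / b k < c + ε := by linarith [hd.2]
    constructor
    · have := mul_lt_mul_of_pos_right h1 (hbpos k)
      rw [div_mul_cancel₀ _ hbne] at this
      linarith
    · have := mul_lt_mul_of_pos_right h2 (hbpos k)
      rw [div_mul_cancel₀ _ hbne] at this
      linarith
  -- telescoping
  have tele : ∀ (ε : ℝ) (N : ℕ),
      (∀ k ≥ N, (c - ε) * b k ≤ u k - u (k + 1) ∧ u k - u (k + 1) ≤ (c + ε) * b k) →
      ∀ n ≥ N, ∀ m : ℕ,
        (c - ε) * ∑ i ∈ Finset.range m, b (n + i) ≤ u n - u (n + m) ∧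
        u n - u (n + m) ≤ (c + ε) * ∑ i ∈ Finset.range m, b (n + i) := by
    intro ε N hN n hn m
    have ht : u n - u (n + m) = ∑ i ∈ Finset.range m, (u (n + i) - u (n + i + 1)) := by
      have h0 := (Finset.sum_range_sub' (fun i => u (n + i)) m).symm
      simpa [add_assoc] using h0
    constructor
    · rw [ht, Finset.mul_sum]
      exact Finset.sum_le_sum fun i _ =>
        (hN (n + i) (le_trans hn (Nat.le_add_right n i))).1
    · rw [ht, Finset.mul_sum]
      exact Finset.sum_le_sum fun i _ =>
        (hN (n + i) (le_trans hn (Nat.le_add_right n i))).2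
  -- summability
  obtain ⟨N₀, hN₀⟩ := key (c / 2) (by positivity)
  have hhalf : c - c / 2 = c / 2 := by ring
  have hsum : Summable b := by
    have hbd : ∀ m : ℕ, ∑ i ∈ Finset.range m, b (N₀ + i) ≤ 2 / c * u N₀ := by
      intro m
      have := (tele (c / 2) N₀ hN₀ N₀ le_rfl m).1
      rw [hhalf] at this
      have h2 : c / 2 * ∑ i ∈ Finset.range m, b (N₀ + i) ≤ u N₀ := by
        linarith [hupos (N₀ + m)]
      calc ∑ i ∈ Finset.range m, b (N₀ + i)
          = 2 / c * (c / 2 * ∑ i ∈ Finset.range m, b (N₀ + i)) := by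
            field_simp
        _ ≤ 2 / c * u N₀ := by
            apply mul_le_mul_of_nonneg_left h2 (by positivity)
    have hs : Summable (fun i => b (N₀ + i)) :=
      summable_of_sum_range_le (fun i => (hbpos _).le) hbd
    have hs' : Summable (fun i => b (i + N₀)) := hs.congr fun i => by rw [add_comm]
    exact (summable_nat_add_iff N₀).mp hs'
  -- n * b n → 0
  have hu0 : Tendsto u atTop (𝓝 0) := by
    set v : ℕ → ℝ := fun k => u (N₀ + k) with hv
    have hanti : Antitone v := by
      apply antitone_nat_of_succ_le
      intro k
      have := (hN₀ (N₀ + k) (Nat.le_add_right _ _)).1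
      rw [hhalf] at this
      have hb := hbpos (N₀ + k)
      simp only [hv]
      have h2 : u (N₀ + k + 1) ≤ u (N₀ + k) := by nlinarith
      exact h2
    have hbdd : BddBelow (Set.range v) := ⟨0, fun x ⟨k, hk⟩ => hk ▸ hupos _⟩
    have hL : Tendsto v atTop (𝓝 (⨅ k, v k)) := tendsto_atTop_ciInf hanti hbdd
    set L : ℝ := ⨅ k, v k with hLdef
    have hL0 : 0 ≤ L := le_ciInf fun k => hupos _
    have hLle : ∀ k, L ≤ v k := fun k => ciInf_le hbdd k
    have hLzero : L = 0 := by
      by_contra hne0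
      have hLpos : 0 < L := lt_of_le_of_ne hL0 (Ne.symm hne0)
      set M : ℕ := max N₀ 1 with hM
      have hcomp : Summable (fun n : ℕ => L / ((n + M : ℕ) : ℝ)) := by
        apply Summable.of_nonneg_of_le
        · intro n
          positivity
        · intro n
          have hge : N₀ ≤ n + M := le_trans (le_max_left _ _) (Nat.le_add_left M n)
          have huL : L ≤ u (n + M) := by
            have := hLle (n + M - N₀)
            simpa only [hv, Nat.add_sub_cancel' hge] using this
          have hnpos : (0 : ℝ) < ((n + M : ℕ) : ℝ) := by
            have : 1 ≤ n + M := le_trans (le_max_right _ _) (Nat.le_add_left M n)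
            exact_mod_cast Nat.lt_of_lt_of_le Nat.zero_lt_one this
          rw [div_le_iff₀ hnpos] at *
          calc L ≤ u (n + M) := huL
            _ = b (n + M) * ((n + M : ℕ) : ℝ) := by simp only [hudef]; ring
        · exact (summable_nat_add_iff M).mpr hsum
      have hcomp' : Summable (fun n : ℕ => L / (n : ℝ)) :=
        (summable_nat_add_iff M).mp hcomp
      have : Summable (fun n : ℕ => ((n : ℝ))⁻¹) := by
        have := hcomp'.mul_left L⁻¹
        apply this.congr
        intro n
        field_simp
      exact Real.not_summable_natCast_inv this
    rw [hLzero] at hL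
    have hv' : Tendsto (fun k => u (k + N₀)) atTop (𝓝 0) :=
      hL.congr fun k => by simp only [hv]; rw [add_comm]
    exact (tendsto_add_atTop_iff_nat N₀).mp hv'
  -- tail sums
  set T : ℕ → ℝ := fun n => ∑' k : ℕ, b (n + k) with hT
  have hTsum : ∀ n, Summable (fun k => b (n + k)) := fun n =>
    hsum.comp_injective (add_right_injective n)
  have hTpos : ∀ n, 0 < T n := fun n =>
    Summable.tsum_pos (hTsum n) (fun k => (hbpos _).le) 0 (hbpos _)
  -- eventual bounds on u n / T n
  have hratio : Tendsto (fun n => u n / T n) atTop (𝓝 c) := by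
    rw [Metric.tendsto_atTop]
    intro ε hε
    obtain ⟨N, hN⟩ := key (ε / 2) (by positivity)
    refine ⟨N, fun n hn => ?_⟩
    have hSlim : Tendsto (fun m => ∑ i ∈ Finset.range m, b (n + i)) atTop (𝓝 (T n)) :=
      (hTsum n).hasSum.tendsto_sum_nat
    have hulim : Tendsto (fun m => u n - u (n + m)) atTop (𝓝 (u n)) := by
      have h1 : Tendsto (fun m => u (n + m)) atTop (𝓝 0) := by
        have := hu0.comp (tendsto_add_atTop_nat n)
        exact this.congr fun m => by simp [add_comm]
      have h2 := (tendsto_const_nhds (x := u n)).sub h1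
      simpa using h2
    have hlow : (c - ε / 2) * T n ≤ u n := by
      have := le_of_tendsto_of_tendsto' (hSlim.const_mul (c - ε / 2)) hulim
        (fun m => (tele (ε / 2) N hN n hn m).1)
      simpa using this
    have hhigh : u n ≤ (c + ε / 2) * T n := by
      have := le_of_tendsto_of_tendsto' hulim (hSlim.const_mul (c + ε / 2))
        (fun m => (tele (ε / 2) N hN n hn m).2)
      simpa using this
    have hT' := hTpos n
    have hub : u n / T n ≤ c + ε / 2 := by
      rw [div_le_iff₀ hT']; linarith
    have hlb : c - ε / 2 ≤ u n / T n := by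
      rw [le_div_iff₀ hT']; linarith
    rw [Real.dist_eq, abs_lt]
    constructor <;> linarith
  -- conclude
  refine ⟨hsum, ?_⟩
  have hfin : Tendsto (fun n => c / (u n / T n)) atTop (𝓝 1) := by
    have h3 := (tendsto_const_nhds (x := c)).div hratio hcpos.ne'
    rwa [div_self hcpos.ne'] at h3
  apply hfin.congr'
  filter_upwards [eventually_ge_atTop 1] with n hn
  have hT' := (hTpos n).ne'
  have hu' : u n ≠ 0 := by
    have : (0:ℝ) < (n:ℝ) := by exact_mod_cast Nat.lt_of_lt_of_le Nat.zero_lt_one hn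
    exact (mul_pos this (hbpos n)).ne'
  show c / (u n / T n) = T n / (u n / c)
  rw [div_div_eq_mul_div, div_div_eq_mul_div, mul_comm]
end

section
/- (Raabe's test, divergent case) If (a_n) is a sequence of nonzero reals with lim_{n→∞} n(|a_{n+1}/a_n| − 1) = α and α > −1, then ∑_{k=1}^n |a_k| → ∞, and moreover ∑_{k=1}^n |a_k| ∼ n|a_n|/(α+1) as n → ∞. -/
open Filter Topology Finset

theorem stmt_6 (a : ℕ → ℝ) (hne : ∀ n, a n ≠ 0) (α : ℝ) (hα : -1 < α)
    (h : Tendsto (fun n : ℕ => (n : ℝ) * (|a (n + 1) / a n| - 1)) atTop (𝓝 α)) :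
    Tendsto (fun n : ℕ => ∑ k ∈ Finset.Icc 1 n, |a k|) atTop atTop ∧
      Tendsto (fun n : ℕ => (∑ k ∈ Finset.Icc 1 n, |a k|) / ((n : ℝ) * |a n| / (α + 1)))
        atTop (𝓝 1) := by
  set b : ℕ → ℝ := fun n => |a n| with hbdef
  have hbpos : ∀ n, 0 < b n := fun n => abs_pos.2 (hne n)
  set u : ℕ → ℝ := fun n => (n : ℝ) * b n with hudef
  set d : ℕ → ℝ := fun n => u (n + 1) - u n with hddef
  have hα1 : (0:ℝ) < α + 1 := by linarith
  -- restate h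
  have h' : Tendsto (fun n : ℕ => (n : ℝ) * (b (n+1) / b n - 1)) atTop (𝓝 α) := by
    refine h.congr fun n => ?_
    rw [abs_div]
  -- ratio tends to 1
  have hr1 : Tendsto (fun n : ℕ => b (n+1) / b n) atTop (𝓝 1) := by
    have hninv : Tendsto (fun n : ℕ => ((n : ℝ))⁻¹) atTop (𝓝 0) :=
      tendsto_inv_atTop_zero.comp tendsto_natCast_atTop_atTop
    have h0 := h'.mul hninv
    rw [mul_zero] at h0
    have h1 : Tendsto (fun n : ℕ => b (n+1) / b n - 1) atTop (𝓝 0) := by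
      refine h0.congr' ?_
      filter_upwards [eventually_ge_atTop 1] with n hn
      have hn0 : (n : ℝ) ≠ 0 := Nat.cast_ne_zero.2 (by omega)
      field_simp
    have := h1.add_const 1
    rw [zero_add] at this
    exact this.congr fun n => by ring
  -- d n / b n → α + 1
  have hdb : Tendsto (fun n : ℕ => d n / b n) atTop (𝓝 (α + 1)) := by
    have := h'.add hr1
    refine this.congr' ?_
    filter_upwards [eventually_ge_atTop 1] with n hn
    have hbn := (hbpos n).ne'
    simp only [hddef, hudef]
    push_cast
    field_simp
    ring
  -- telescoping: u n = ∑ d over range n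
  have hutel : ∀ n, u n = ∑ k ∈ range n, d k := by
    intro n
    rw [Finset.sum_range_sub (f := u)]
    simp [hudef]
  -- choose N with bounds
  have hge := Filter.Tendsto.eventually_const_le (show (α+1)/2 < α+1 by linarith) hdb
  have hle := Filter.Tendsto.eventually_le_const (show α+1 < α+2 by linarith) hdb
  obtain ⟨N0, hN0⟩ := eventually_atTop.1 (hge.and hle)
  set N := max N0 1 with hNdef
  have hN1 : 1 ≤ N := le_max_right _ _
  have hNlo : ∀ n, N ≤ n → (α+1)/2 * b n ≤ d n := by
    intro n hn
    have := (hN0 n (le_trans (le_max_left _ _) hn)).1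
    exact (le_div_iff₀ (hbpos n)).1 this
  have hNhi : ∀ n, N ≤ n → d n ≤ (α+2) * b n := by
    intro n hn
    have := (hN0 n (le_trans (le_max_left _ _) hn)).2
    exact (div_le_iff₀ (hbpos n)).1 this
  have hdnonneg : ∀ n, N ≤ n → 0 ≤ d n := fun n hn =>
    le_trans (by positivity) (hNlo n hn)
  -- u is monotone from N on
  have huN : ∀ n, N ≤ n → u N ≤ u n := by
    intro n hn
    induction n with
    | zero => omega
    | succ n ih =>
      rcases Nat.lt_or_ge n N with h1 | h1
      · have : N = n + 1 := by omega
        rw [this]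
      · have h2 := ih h1
        have h3 : u (n+1) = u n + d n := by simp [hddef]
        have := hdnonneg n h1
        linarith
  have huNpos : 0 < u N := by
    have : (0:ℝ) < (N:ℝ) := by exact_mod_cast hN1
    exact mul_pos this (hbpos N)
  -- lower bound on b k for k ≥ N
  have hblow : ∀ k, N ≤ k → u N / ((k:ℝ)+1) ≤ b k := by
    intro k hk
    have hk0 : (0:ℝ) < (k:ℝ) := by exact_mod_cast lt_of_lt_of_le hN1 hk
    have h1 : u N ≤ u k := huN k hk
    have h2 : b k = u k / (k:ℝ) := by
      simp only [hudef]; field_simp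
    rw [h2]
    exact div_le_div₀ (le_trans huNpos.le h1) h1 hk0 (by linarith)
  -- divergence of u
  set c : ℝ := (α+1)/2 * u N with hcdef
  have hcpos : 0 < c := mul_pos (by linarith) huNpos
  set H : ℕ → ℝ := fun n => ∑ i ∈ range n, (1/((i:ℝ)+1)) with hHdef
  have hHtop : Tendsto H atTop atTop := Real.tendsto_sum_range_one_div_nat_succ_atTop
  have hulow : ∀ n, N ≤ n → (∑ k ∈ range N, d k) + c * (H n - H N) ≤ u n := by
    intro n hn
    rw [hutel n, ← Finset.sum_range_add_sum_Ico d hn]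
    have hle2 : c * (H n - H N) ≤ ∑ k ∈ Finset.Ico N n, d k := by
      have hHsub : H n - H N = ∑ k ∈ Finset.Ico N n, (1/((k:ℝ)+1)) :=
        (Finset.sum_Ico_eq_sub _ hn).symm
      rw [hHsub, Finset.mul_sum]
      apply Finset.sum_le_sum
      intro k hk
      obtain ⟨hk1, -⟩ := Finset.mem_Ico.1 hk
      calc c * (1/((k:ℝ)+1)) = (α+1)/2 * (u N / ((k:ℝ)+1)) := by rw [hcdef]; ring
        _ ≤ (α+1)/2 * b k := by
            exact mul_le_mul_of_nonneg_left (hblow k hk1) (by linarith)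
        _ ≤ d k := hNlo k hk1
    linarith
  have hutop : Tendsto u atTop atTop := by
    have hlow : Tendsto (fun n => (∑ k ∈ range N, d k) + c * (H n - H N)) atTop atTop := by
      apply tendsto_atTop_add_const_left
      have h2 := tendsto_atTop_add_const_right atTop (-(H N)) hHtop
      exact (h2.const_mul_atTop hcpos).congr fun n => by ring
    refine tendsto_atTop_mono' atTop ?_ hlow
    filter_upwards [eventually_ge_atTop N] with n hn using hulow n hn
  -- divergence of T
  set T : ℕ → ℝ := fun n => ∑ k ∈ range n, b k with hTdef
  have hTlow : ∀ n, N ≤ n → (u n - u N) / (α + 2) ≤ T n := by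
    intro n hn
    have h1 : ∑ k ∈ Finset.Ico N n, d k = u n - u N := by
      rw [Finset.sum_Ico_eq_sub d hn, ← hutel, ← hutel]
    have h2 : (u n - u N)/(α+2) ≤ ∑ k ∈ Finset.Ico N n, b k := by
      rw [← h1, Finset.sum_div]
      apply Finset.sum_le_sum
      intro k hk
      obtain ⟨hk1, -⟩ := Finset.mem_Ico.1 hk
      rw [div_le_iff₀ (by linarith : (0:ℝ) < α+2)]
      have := hNhi k hk1
      linarith
    refine h2.trans ?_
    apply Finset.sum_le_sum_of_subset_of_nonneg
    · rw [Finset.range_eq_Ico]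
      exact Finset.Ico_subset_Ico (Nat.zero_le _) le_rfl
    · exact fun i _ _ => (hbpos i).le
  have hTtop : Tendsto T atTop atTop := by
    have hlow : Tendsto (fun n => (u n - u N) / (α + 2)) atTop atTop :=
      ((tendsto_atTop_add_const_right atTop (-(u N)) hutop).atTop_div_const
        (r := α+2) (by linarith)).congr fun n => by ring
    refine tendsto_atTop_mono' atTop ?_ hlow
    filter_upwards [eventually_ge_atTop N] with n hn using hTlow n hn
  -- the little-o argument
  have hfo : (fun n => d n - (α+1) * b n) =o[atTop] b := by
    rw [Asymptotics.isLittleO_iff_tendsto (fun n hn => absurd hn (hbpos n).ne')]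
    have h2 := hdb.sub_const (α+1)
    rw [sub_self] at h2
    refine h2.congr fun n => ?_
    have hbn := (hbpos n).ne'
    field_simp
  have ho := hfo.sum_range (fun n => (hbpos n).le) hTtop
  have hsum : ∀ n, ∑ k ∈ range n, (d k - (α+1)*b k) = u n - (α+1) * T n := by
    intro n
    rw [Finset.sum_sub_distrib, ← Finset.mul_sum, ← hutel]
  have ho' : (fun n => u n - (α+1) * T n) =o[atTop] T :=
    ho.congr hsum (fun n => rfl)
  have hTpos : ∀ n, 1 ≤ n → 0 < T n := by
    intro n hn
    have h1 : b 0 ≤ T n :=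
      Finset.single_le_sum (fun i _ => (hbpos i).le) (Finset.mem_range.2 (by omega))
    exact lt_of_lt_of_le (hbpos 0) h1
  have hupos : ∀ n : ℕ, 1 ≤ n → 0 < u n := by
    intro n hn
    have : (0:ℝ) < (n:ℝ) := by exact_mod_cast hn
    exact mul_pos this (hbpos n)
  have hUT : Tendsto (fun n => u n / T n) atTop (𝓝 (α+1)) := by
    have h2 := ho'.tendsto_div_nhds_zero.add_const (α+1)
    rw [zero_add] at h2
    refine h2.congr' ?_
    filter_upwards [eventually_ge_atTop 1] with n hn
    have hT := (hTpos n hn).ne'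
    field_simp
    ring
  have hTU : Tendsto (fun n => T n / u n) atTop (𝓝 (α+1)⁻¹) := by
    have h2 := hUT.inv₀ hα1.ne'
    refine h2.congr fun n => ?_
    rw [inv_div]
  -- relating the Icc sum to T
  have hS : ∀ n : ℕ, (∑ k ∈ Finset.Icc 1 n, b k) = T (n+1) - b 0 := by
    intro n
    have h1 : ∑ k ∈ Finset.Ico 0 1, b k + ∑ k ∈ Finset.Ico 1 (n+1), b k
        = ∑ k ∈ Finset.Ico 0 (n+1), b k :=
      Finset.sum_Ico_consecutive _ (by omega) (by omega)
    have h2 : Finset.Ico 1 (n+1) = Finset.Icc 1 n := Finset.Ico_add_one_right_eq_Icc 1 n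
    have h3 : ∑ k ∈ Finset.Ico 0 1, b k = b 0 := by simp
    have h4 : T (n+1) = ∑ k ∈ Finset.Ico 0 (n+1), b k := by
      rw [hTdef]; dsimp only; rw [Finset.range_eq_Ico]
    rw [h2, h3] at h1
    rw [h4, ← h1]
    ring
  constructor
  · have h1 : Tendsto (fun n => T (n+1)) atTop atTop := hTtop.comp (tendsto_add_atTop_nat 1)
    have h2 := tendsto_atTop_add_const_right atTop (-(b 0)) h1
    refine h2.congr fun n => ?_
    rw [hS n]
    ring
  · have Lb : Tendsto (fun n : ℕ => b n / u n) atTop (𝓝 0) := by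
      refine tendsto_one_div_atTop_nhds_zero_nat.congr' ?_
      filter_upwards [eventually_ge_atTop 1] with n hn
      have hn0 : ((n:ℝ)) ≠ 0 := Nat.cast_ne_zero.2 (by omega)
      rw [hudef]
      field_simp
      rw [div_self (hbpos n).ne']
    have Lc : Tendsto (fun n : ℕ => b 0 / u n) atTop (𝓝 0) := by
      have h2 := hutop.inv_tendsto_atTop.const_mul (b 0)
      rw [mul_zero] at h2
      refine h2.congr fun n => ?_
      rw [div_eq_mul_inv]
      rfl
    have L1 := hTU.const_mul (α+1)
    have L2 := Lb.const_mul (α+1)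
    have L3 := Lc.const_mul (α+1)
    rw [mul_zero] at L2 L3
    have L := (L1.add L2).sub L3
    rw [mul_inv_cancel₀ hα1.ne', add_zero, sub_zero] at L
    refine L.congr' ?_
    filter_upwards [eventually_ge_atTop 1] with n hn
    have hun0 := (hupos n hn).ne'
    rw [hS n, show T (n+1) = T n + b n from Finset.sum_range_succ b n]
    have hb : |a n| ≠ 0 := (hbpos n).ne'
    rw [show u n = (n:ℝ) * |a n| from rfl]
    field_simp
end

section
/- If (a_n) is a sequence of nonzero reals with n(|a_{n+1}/a_n| − 1) → α and α < 0, then a_n → 0; if α > 0, then |a_n| → ∞. -/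
open Filter Topology

private lemma aux_tendsto (b : ℕ → ℝ) (c : ℝ) (hc : 0 < c) (N : ℕ)
    (hstep : ∀ n, N ≤ n → b n + c / (n + 1) ≤ b (n + 1)) :
    Tendsto b atTop atTop := by
  set H : ℕ → ℝ := fun n => ∑ i ∈ Finset.range n, (1 : ℝ) / (i + 1) with hH
  have key : ∀ n, N ≤ n → b N + c * (H n - H N) ≤ b n := by
    intro n hn
    induction n, hn using Nat.le_induction with
    | base => simp
    | succ n hn ih =>
      have h1 := hstep n hn
      have hHn : H (n + 1) = H n + 1 / (n + 1) := by
        simp [hH, Finset.sum_range_succ]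
      have heq : b N + c * (H (n+1) - H N) = (b N + c * (H n - H N)) + c / (n+1) := by
        rw [hHn]; ring
      rw [heq]
      linarith
  have hHtop : Tendsto H atTop atTop := Real.tendsto_sum_range_one_div_nat_succ_atTop
  have hlim : Tendsto (fun n => b N + c * (H n - H N)) atTop atTop := by
    apply tendsto_atTop_add_const_left
    exact (tendsto_atTop_add_const_right _ (-H N) hHtop).const_mul_atTop hc
  exact tendsto_atTop_mono' atTop (eventually_atTop.2 ⟨N, key⟩) hlim

theorem stmt_7 (a : ℕ → ℝ) (hne : ∀ n, a n ≠ 0) (α : ℝ)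
    (h : Tendsto (fun n : ℕ => (n : ℝ) * (|a (n + 1) / a n| - 1)) atTop (𝓝 α)) :
    (α < 0 → Tendsto a atTop (𝓝 0)) ∧
    (0 < α → Tendsto (fun n => |a n|) atTop atTop) := by
  set r : ℕ → ℝ := fun n => |a (n+1) / a n| with hr
  have hrpos : ∀ n, 0 < r n := fun n => abs_pos.2 (div_ne_zero (hne _) (hne _))
  set b : ℕ → ℝ := fun n => Real.log |a n| with hb
  have hbstep : ∀ n, b (n+1) - b n = Real.log (r n) := by
    intro n
    simp only [hb, hr, abs_div]
    rw [Real.log_div (abs_ne_zero.2 (hne _)) (abs_ne_zero.2 (hne _))]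
  have habs : ∀ n, |a n| = Real.exp (b n) := fun n =>
    (Real.exp_log (abs_pos.2 (hne n))).symm
  constructor
  · intro hα
    -- eventually n*(r n - 1) < α/2
    have hev : ∀ᶠ n : ℕ in atTop, (n : ℝ) * (r n - 1) < α/2 :=
      h.eventually_lt_const (by linarith)
    obtain ⟨N0, hN0⟩ := eventually_atTop.1 hev
    have hc : 0 < -(α/4) := by linarith
    have haux : Tendsto (fun n => -b n) atTop atTop := by
      apply aux_tendsto _ _ hc (max N0 1)
      intro n hn
      have hn0 : N0 ≤ n := le_trans (le_max_left _ _) hn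
      have hn1 : (1 : ℝ) ≤ n := by
        exact_mod_cast le_trans (le_max_right _ _) hn
      have hnpos : (0 : ℝ) < n := by linarith
      have h1 : (n : ℝ) * (r n - 1) < α/2 := hN0 n hn0
      have h2 : r n - 1 < (α/2) / n := by
        rw [lt_div_iff₀ hnpos]; linarith [mul_comm (r n - 1) (n : ℝ)]
      have h3 : Real.log (r n) ≤ r n - 1 := Real.log_le_sub_one_of_pos (hrpos n)
      have h4 : (α/2) / n ≤ (α/4) / (n + 1) := by
        rw [div_le_div_iff₀ hnpos (by linarith)]
        nlinarith
      have h5 : b (n+1) - b n ≤ (α/4) / (n+1) := by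
        rw [hbstep n]; linarith
      have : -(α/4) / (↑n + 1) = -((α/4) / (↑n + 1)) := by ring
      rw [this]
      linarith
    have hbbot : Tendsto b atTop atBot := by
      rw [← tendsto_neg_atTop_iff]; exact haux
    have habs0 : Tendsto (fun n => |a n|) atTop (𝓝 0) := by
      apply (Real.tendsto_exp_atBot.comp hbbot).congr
      intro n
      simp [Function.comp, ← habs]
    rw [tendsto_zero_iff_norm_tendsto_zero]
    simpa [Real.norm_eq_abs] using habs0
  · intro hα
    -- r n - 1 → 0
    have hrlim : Tendsto (fun n => r n - 1) atTop (𝓝 0) := by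
      have hinv : Tendsto (fun n : ℕ => (n : ℝ)⁻¹) atTop (𝓝 0) :=
        tendsto_inv_atTop_zero.comp tendsto_natCast_atTop_atTop
      have := hinv.mul h
      rw [zero_mul] at this
      apply this.congr'
      filter_upwards [eventually_ge_atTop 1] with n hn
      have : (n : ℝ) ≠ 0 := by positivity
      field_simp
      rfl
    have hev2 : ∀ᶠ n : ℕ in atTop, r n - 1 < 1 :=
      hrlim.eventually_lt_const (by norm_num)
    have hev : ∀ᶠ n : ℕ in atTop, α/2 < (n : ℝ) * (r n - 1) :=
      h.eventually_const_lt (by linarith)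
    obtain ⟨N0, hN0⟩ := eventually_atTop.1 (hev.and hev2)
    have hc : 0 < α/4 := by linarith
    have haux : Tendsto b atTop atTop := by
      apply aux_tendsto _ _ hc (max N0 1)
      intro n hn
      have hn0 : N0 ≤ n := le_trans (le_max_left _ _) hn
      have hn1 : (1 : ℝ) ≤ n := by
        exact_mod_cast le_trans (le_max_right _ _) hn
      have hnpos : (0 : ℝ) < n := by linarith
      obtain ⟨h1, h1'⟩ := hN0 n hn0
      have h2 : (α/2) / n < r n - 1 := by
        rw [div_lt_iff₀ hnpos]; linarith [mul_comm (r n - 1) (n : ℝ)]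
      have hr2 : r n < 2 := by linarith
      -- log (r n) ≥ (r n - 1) / r n
      have h3 : (r n - 1) / r n ≤ Real.log (r n) := by
        have := Real.log_le_sub_one_of_pos (inv_pos.2 (hrpos n))
        rw [Real.log_inv] at this
        have heq : (r n)⁻¹ - 1 = -((r n - 1) / r n) := by
          rw [← neg_div, neg_sub, sub_div, div_self (hrpos n).ne', one_div]
        rw [heq] at this
        linarith
    -- (r n - 1)/r n ≥ ((α/2)/n)/2 = (α/4)/n ≥ (α/4)/(n+1)
      have hrn1 : 0 < r n - 1 := by
        have : 0 < (α/2)/n := div_pos (by linarith) hnpos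
        linarith
      have h4 : (α/4) / (n + 1) ≤ (r n - 1) / r n := by
        have hA : (α/4) / (n+1) ≤ (α/4) / n := by
          apply div_le_div_of_nonneg_left (by linarith) hnpos (by linarith)
        have hB : (α/4) / n ≤ (r n - 1) / r n := by
          rw [div_le_div_iff₀ hnpos (hrpos n)]
          nlinarith
        linarith
      have h5 : (α/4) / (n+1) ≤ b (n+1) - b n := by
        rw [hbstep n]; linarith
      linarith
    have := Real.tendsto_exp_atTop.comp haux
    apply this.congr
    intro n
    simp [Function.comp, ← habs]
end

section
/- (Borderline case α = −1) If (a_n) is a sequence of nonzero reals with n(|a_{n+1}/a_n| − 1) → −1 and ∑ |a_n| = ∞, then n·|a_n| / ∑_{k=1}^n |a_k| → 0 as n → ∞. -/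
open Filter Topology

private lemma exp_half_le {x : ℝ} (h0 : 0 ≤ x) (h1 : x ≤ 1) : Real.exp (x/2) ≤ 1 + x := by
  have h2 : (0:ℝ) < 1 - x/2 := by linarith
  have h3 : 1 - x/2 ≤ Real.exp (-(x/2)) := by
    have := Real.add_one_le_exp (-(x/2)); linarith
  have h4 : Real.exp (x/2) * (1 - x/2) ≤ 1 := by
    calc Real.exp (x/2) * (1 - x/2) ≤ Real.exp (x/2) * Real.exp (-(x/2)) :=
          mul_le_mul_of_nonneg_left h3 (Real.exp_pos _).le
      _ = 1 := by rw [← Real.exp_add]; simp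
  nlinarith [Real.exp_pos (x/2)]

set_option maxHeartbeats 2000000 in
private lemma aux_main (b : ℕ → ℝ) (hb : ∀ n, 0 < b n)
    (ht0 : Tendsto (fun n : ℕ => (n : ℝ) * (b (n + 1) / b n - 1)) atTop (𝓝 (-1))) :
    Tendsto (fun n : ℕ => (n : ℝ) * b n / ∑ k ∈ Finset.Icc 1 n, b k) atTop (𝓝 0) := by
  set S : ℕ → ℝ := fun n => ∑ k ∈ Finset.Icc 1 n, b k with hSdef
  set L : ℕ → ℝ := fun n => (n : ℝ) * b n with hLdef
  show Tendsto (fun n : ℕ => L n / S n) atTop (𝓝 0)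
  have hSrec : ∀ n, S (n+1) = S n + b (n+1) := by
    intro n
    exact Finset.sum_Icc_succ_top (Nat.le_add_left 1 n) b
  have hSpos : ∀ n, 1 ≤ n → 0 < S n := by
    intro n hn
    exact Finset.sum_pos (fun k _ => hb k) ⟨1, Finset.mem_Icc.mpr ⟨le_refl 1, hn⟩⟩
  have hLpos : ∀ n, 1 ≤ n → 0 < L n := by
    intro n hn
    exact mul_pos (by exact_mod_cast Nat.lt_of_lt_of_le Nat.zero_lt_one hn) (hb n)
  -- ratio of b tends to 1
  have hq : Tendsto (fun n : ℕ => b (n+1) / b n) atTop (𝓝 1) := by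
    have h1 : Tendsto (fun n : ℕ => ((n:ℝ))⁻¹) atTop (𝓝 0) := tendsto_inv_atTop_nhds_zero_nat
    have h2 := ht0.mul h1
    rw [show (-1 : ℝ) * 0 = 0 by ring] at h2
    have h3 : Tendsto (fun n : ℕ => b (n+1) / b n - 1) atTop (𝓝 0) := by
      apply h2.congr'
      filter_upwards [eventually_ge_atTop 1] with n hn
      have hn0 : (n:ℝ) ≠ 0 := by
        exact_mod_cast Nat.one_le_iff_ne_zero.mp hn
      field_simp
    have h4 := h3.add_const 1
    rw [zero_add] at h4
    exact h4.congr (fun n => by ring)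
  -- ratio of L, scaled by n, tends to 0
  have hLrat : Tendsto (fun n : ℕ => (n:ℝ) * (L (n+1) / L n - 1)) atTop (𝓝 0) := by
    have h2 := ht0.add hq
    rw [show (-1 : ℝ) + 1 = 0 by ring] at h2
    apply h2.congr'
    filter_upwards [eventually_ge_atTop 1] with n hn
    have hn0 : (n:ℝ) ≠ 0 := by exact_mod_cast Nat.one_le_iff_ne_zero.mp hn
    have hbn : b n ≠ 0 := (hb n).ne'
    simp only [hLdef]
    push_cast
    field_simp
    ring
  rw [Metric.tendsto_atTop]
  intro ε hε
  set η : ℝ := min ε 1 / 2 with hηdef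
  have hη0 : 0 < η := by
    have : 0 < min ε 1 := lt_min hε one_pos
    rw [hηdef]; linarith
  have hη1 : η ≤ 1/2 := by
    have : min ε 1 ≤ 1 := min_le_right _ _
    rw [hηdef]; linarith
  have h2ηε : 2 * η ≤ ε := by
    have : min ε 1 ≤ ε := min_le_left _ _
    rw [hηdef]; linarith
  obtain ⟨N₁, hN₁⟩ := (Metric.tendsto_atTop.mp hLrat) (η/16) (by positivity)
  set N := max N₁ 1 with hNdef
  have hN1 : 1 ≤ N := le_max_right _ _
  have hNN₁ : N₁ ≤ N := le_max_left _ _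
  -- abs ratio bound on L
  have hLb : ∀ n, N ≤ n → |L (n+1) / L n - 1| ≤ (η/16) / n := by
    intro n hn
    have h1 := hN₁ n (hNN₁.trans hn)
    rw [Real.dist_eq, sub_zero, abs_mul, Nat.abs_cast] at h1
    have hnp : (0:ℝ) < n := by exact_mod_cast Nat.lt_of_lt_of_le Nat.zero_lt_one (hN1.trans hn)
    rw [le_div_iff₀ hnp]
    nlinarith [abs_nonneg (L (n+1) / L n - 1)]
  have hLub : ∀ n, N ≤ n → L (n+1) ≤ L n * (1 + (η/16) / n) := by
    intro n hn
    have h1 := (abs_le.mp (hLb n hn)).2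
    have hLn := hLpos n (hN1.trans hn)
    have h2 : L (n+1) / L n ≤ 1 + (η/16)/n := by linarith
    calc L (n+1) = L n * (L (n+1) / L n) := by field_simp
      _ ≤ L n * (1 + (η/16)/n) := mul_le_mul_of_nonneg_left h2 hLn.le
  have hLlb : ∀ n, N ≤ n → L n * (1 - (η/16) / n) ≤ L (n+1) := by
    intro n hn
    have h1 := (abs_le.mp (hLb n hn)).1
    have hLn := hLpos n (hN1.trans hn)
    have h2 : 1 - (η/16)/n ≤ L (n+1) / L n := by linarith
    calc L n * (1 - (η/16)/n) ≤ L n * (L (n+1) / L n) := by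
          exact mul_le_mul_of_nonneg_left h2 hLn.le
      _ = L (n+1) := by field_simp
  have hd01 : ∀ n, N ≤ n → 0 ≤ (η/16) / (n:ℝ) ∧ (η/16) / (n:ℝ) ≤ η/16 := by
    intro n hn
    have hnp : (1:ℝ) ≤ n := by exact_mod_cast hN1.trans hn
    constructor
    · positivity
    · rw [div_le_iff₀ (by linarith)]
      nlinarith
  -- any-step bound
  have hstep_any : ∀ n, N ≤ n → L (n+1) / S (n+1) ≤ (L n / S n) * (1 + η/16) := by
    intro n hn
    have hSn := hSpos n (hN1.trans hn)
    have hLn := hLpos n (hN1.trans hn)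
    obtain ⟨hd0, hd1⟩ := hd01 n hn
    have h1 : L (n+1) ≤ L n * (1 + η/16) := by
      calc L (n+1) ≤ L n * (1 + (η/16)/n) := hLub n hn
        _ ≤ L n * (1 + η/16) := by nlinarith
    have h2 : S n ≤ S (n+1) := by
      rw [hSrec n]; linarith [hb (n+1)]
    calc L (n+1) / S (n+1) ≤ (L n * (1 + η/16)) / S n := by
          apply div_le_div₀ (by nlinarith) h1 hSn h2
      _ = (L n / S n) * (1 + η/16) := by ring
  -- the crucial decay step when ratio is large
  have hstep_high : ∀ n, N ≤ n → η ≤ L n / S n →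
      L (n+1) / S (n+1) ≤ (L n / S n) * Real.exp (-((η/8) / ((n:ℝ)+1))) := by
    intro n hn hr
    have hSn := hSpos n (hN1.trans hn)
    have hLn := hLpos n (hN1.trans hn)
    have hn1R : (1:ℝ) ≤ n := by exact_mod_cast hN1.trans hn
    obtain ⟨hd0, hd1⟩ := hd01 n hn
    obtain ⟨u, hu⟩ : ∃ u : ℝ, u = (η/8) / ((n:ℝ)+1) := ⟨_, rfl⟩
    rw [← hu]
    have hu0 : 0 ≤ u := by rw [hu]; positivity
    have hLS : η * S n ≤ L n := (le_div_iff₀ hSn).mp hr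
    -- lower bound on b (n+1)
    have hb1 : L n / (2 * ((n:ℝ)+1)) ≤ b (n+1) := by
      have h1 : L n * (1/2 : ℝ) ≤ L (n+1) := by
        calc L n * (1/2 : ℝ) ≤ L n * (1 - (η/16)/n) := by nlinarith
          _ ≤ L (n+1) := hLlb n hn
      have h2 : L (n+1) = ((n:ℝ)+1) * b (n+1) := by
        rw [hLdef]; push_cast; ring
      rw [div_le_iff₀ (by positivity)]
      calc L n ≤ 2 * L (n+1) := by linarith
        _ = b (n+1) * (2 * ((n:ℝ)+1)) := by rw [h2]; ring
    -- S grows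
    have hSgrow : S n * Real.exp (2 * u) ≤ S (n+1) := by
      have hx0 : 0 ≤ η / (2 * ((n:ℝ)+1)) := by positivity
      have hx1 : η / (2 * ((n:ℝ)+1)) ≤ 1 := by
        rw [div_le_iff₀ (by positivity)]; nlinarith
      have he := exp_half_le hx0 hx1
      have harg : η / (2 * ((n:ℝ)+1)) / 2 = 2 * u := by
        rw [hu]
        field_simp
        ring
      rw [harg] at he
      have h1 : S n + η * S n / (2 * ((n:ℝ)+1)) ≤ S (n+1) := by
        rw [hSrec n]
        have : η * S n / (2 * ((n:ℝ)+1)) ≤ b (n+1) := by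
          calc η * S n / (2 * ((n:ℝ)+1)) ≤ L n / (2 * ((n:ℝ)+1)) := by gcongr
            _ ≤ b (n+1) := hb1
        linarith
      calc S n * Real.exp (2*u) ≤ S n * (1 + η / (2 * ((n:ℝ)+1))) :=
            mul_le_mul_of_nonneg_left he hSn.le
        _ = S n + η * S n / (2 * ((n:ℝ)+1)) := by ring
        _ ≤ S (n+1) := h1
    -- L grows slowly
    have hLgrow : L (n+1) ≤ L n * Real.exp u := by
      have h1 : (η/16)/(n:ℝ) ≤ u := by
        rw [hu, div_le_div_iff₀ (by linarith) (by positivity)]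
        nlinarith
      calc L (n+1) ≤ L n * (1 + (η/16)/n) := hLub n hn
        _ ≤ L n * (1 + u) := mul_le_mul_of_nonneg_left (by linarith) hLn.le
        _ ≤ L n * Real.exp u :=
            mul_le_mul_of_nonneg_left (by linarith [Real.add_one_le_exp u]) hLn.le
    have hrw : (L n / S n) * Real.exp (-u) = (L n * Real.exp u) / (S n * Real.exp (2*u)) := by
      have h2 : Real.exp u / Real.exp (2*u) = Real.exp (-u) := by
        rw [← Real.exp_sub]; congr 1; ring
      rw [← h2, div_mul_div_comm]
    rw [hrw]
    exact div_le_div₀ (by positivity) hLgrow (by positivity) hSgrow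
  -- invariant: below 2η stays below 2η
  have hinv : ∀ n, N ≤ n → L n / S n < 2*η → L (n+1) / S (n+1) < 2*η := by
    intro n hn hr
    have hSn := hSpos n (hN1.trans hn)
    have hLn := hLpos n (hN1.trans hn)
    have hr0 : 0 < L n / S n := div_pos hLn hSn
    by_cases hc : η ≤ L n / S n
    · have h1 := hstep_high n hn hc
      have h2 : Real.exp (-((η/8) / ((n:ℝ)+1))) ≤ 1 := by
        rw [Real.exp_le_one_iff]
        have : (0:ℝ) ≤ (η/8) / ((n:ℝ)+1) := by positivity
        linarith
      nlinarith [Real.exp_pos (-((η/8) / ((n:ℝ)+1)))]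
    · push_neg at hc
      have h1 := hstep_any n hn
      nlinarith
  -- Step 1: ratio drops below η at some point
  have hio : ∃ M, N ≤ M ∧ L M / S M < η := by
    by_contra hcon
    push_neg at hcon
    have hdecay : ∀ n, N ≤ n → L n / S n ≤
        (L N / S N) * Real.exp (-(η/8) * ∑ k ∈ Finset.Ico N n, (1:ℝ)/((k:ℝ)+1)) := by
      intro n hn
      induction n, hn using Nat.le_induction with
      | base => simp
      | succ n hn ih =>
        have h1 := hstep_high n hn (hcon n hn)
        calc L (n+1) / S (n+1) ≤ (L n / S n) * Real.exp (-((η/8) / ((n:ℝ)+1))) := h1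
          _ ≤ ((L N / S N) * Real.exp (-(η/8) * ∑ k ∈ Finset.Ico N n, (1:ℝ)/((k:ℝ)+1)))
              * Real.exp (-((η/8) / ((n:ℝ)+1))) :=
              mul_le_mul_of_nonneg_right ih (Real.exp_pos _).le
          _ = (L N / S N) * Real.exp (-(η/8) * ∑ k ∈ Finset.Ico N (n+1), (1:ℝ)/((k:ℝ)+1)) := by
              rw [Finset.sum_Ico_succ_top hn, mul_assoc, ← Real.exp_add]
              congr 2
              ring
    have hharm : Tendsto (fun n : ℕ => ∑ k ∈ Finset.range n, (1:ℝ)/((k:ℝ)+1)) atTop atTop := by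
      have := Real.tendsto_sum_range_one_div_nat_succ_atTop
      apply this.congr
      intro n
      apply Finset.sum_congr rfl
      intro k _
      push_cast
      ring
    have hH : Tendsto (fun n : ℕ => ∑ k ∈ Finset.Ico N n, (1:ℝ)/((k:ℝ)+1)) atTop atTop := by
      have h1 : Tendsto (fun n : ℕ => (∑ k ∈ Finset.range n, (1:ℝ)/((k:ℝ)+1))
          + (- ∑ k ∈ Finset.range N, (1:ℝ)/((k:ℝ)+1))) atTop atTop :=
        tendsto_atTop_add_const_right _ _ hharm
      apply h1.congr'
      filter_upwards [eventually_ge_atTop N] with n hn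
      rw [Finset.sum_Ico_eq_sub _ hn]
      ring
    have hE : Tendsto (fun n : ℕ => (L N / S N) *
        Real.exp (-(η/8) * ∑ k ∈ Finset.Ico N n, (1:ℝ)/((k:ℝ)+1))) atTop (𝓝 0) := by
      have h1 : Tendsto (fun n : ℕ => (η/8) * ∑ k ∈ Finset.Ico N n, (1:ℝ)/((k:ℝ)+1))
          atTop atTop := hH.const_mul_atTop (by positivity)
      have h2 : Tendsto (fun n : ℕ => -(η/8) * ∑ k ∈ Finset.Ico N n, (1:ℝ)/((k:ℝ)+1))
          atTop atBot := by
        have := tendsto_neg_atTop_atBot.comp h1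
        apply this.congr
        intro n
        simp [Function.comp]
      have h3 := Real.tendsto_exp_atBot.comp h2
      have h4 := h3.const_mul (L N / S N)
      rw [mul_zero] at h4
      exact h4
    obtain ⟨n, hn1, hn2⟩ := ((hE.eventually (gt_mem_nhds hη0)).and (eventually_ge_atTop N)).exists
    have := hdecay n hn2
    have := hcon n hn2
    linarith
  obtain ⟨M, hM1, hM2⟩ := hio
  refine ⟨M, fun n hn => ?_⟩
  have hbound : ∀ m, M ≤ m → L m / S m < 2*η := by
    intro m hm
    induction m, hm using Nat.le_induction with
    | base => linarith
    | succ m hm ih => exact hinv m (hM1.trans hm) ih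
  have h1 := hbound n hn
  have h2 : 0 ≤ L n / S n :=
    le_of_lt (div_pos (hLpos n (hN1.trans (hM1.trans hn))) (hSpos n (hN1.trans (hM1.trans hn))))
  rw [Real.dist_eq, sub_zero, abs_of_nonneg h2]
  linarith

theorem stmt_8 (a : ℕ → ℝ) (hne : ∀ n, a n ≠ 0)
    (h : Tendsto (fun n : ℕ => (n : ℝ) * (|a (n + 1) / a n| - 1)) atTop (𝓝 (-1)))
    (hdiv : Tendsto (fun n : ℕ => ∑ k ∈ Finset.Icc 1 n, |a k|) atTop atTop) :
    Tendsto (fun n : ℕ => (n : ℝ) * |a n| / ∑ k ∈ Finset.Icc 1 n, |a k|) atTop (𝓝 0) := by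
  have h' : Tendsto (fun n : ℕ => (n : ℝ) * (|a (n + 1)| / |a n| - 1)) atTop (𝓝 (-1)) := by
    simpa [abs_div] using h
  exact aux_main (fun n => |a n|) (fun n => abs_pos.mpr (hne n)) h'
end

section
/- Let α(n) = n(|a_{n+1}/a_n| − 1) → −1, and suppose the series B(n) = ∑_{k=k₀}^n (α(k)+1)/k converges to a finite limit L as n → ∞. Then n·|a_n| converges to a finite positive limit, and hence ∑ |a_n| = ∞. -/
open Filter Topology

lemma log_approx10 {x : ℝ} (hx : (1:ℝ)/2 ≤ x) : |Real.log x - (x - 1)| ≤ 2 * (x - 1)^2 := by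
  have hx0 : 0 < x := lt_of_lt_of_le (by norm_num) hx
  have h1 : Real.log x ≤ x - 1 := Real.log_le_sub_one_of_pos hx0
  have h2 : (x - 1) / x ≤ Real.log x := by
    have h3 := Real.log_le_sub_one_of_pos (show 0 < x⁻¹ by positivity)
    rw [Real.log_inv] at h3
    have h4 : -(x⁻¹ - 1) ≤ Real.log x := by linarith
    have h5 : (x-1)/x = -(x⁻¹ - 1) := by field_simp; ring
    linarith
  rw [abs_sub_comm, abs_of_nonneg (by linarith)]
  have heq : (x-1) - (x-1)/x = (x-1)^2 / x := by field_simp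
  have hle : (x-1)^2 / x ≤ 2 * (x-1)^2 := by
    rw [div_le_iff₀ hx0]
    nlinarith [sq_nonneg (x-1)]
  linarith

lemma key_lemma (b r : ℕ → ℝ) (hb : ∀ n, 0 < b n)
    (hrb : ∀ n, b (n+1) = b n * r n)
    (k₀ : ℕ) (L : ℝ)
    (hB : Tendsto (fun n : ℕ => ∑ k ∈ Finset.Icc k₀ n, ((k:ℝ) * (r k - 1) + 1) / k)
      atTop (𝓝 L))
    (h : Tendsto (fun n : ℕ => (n:ℝ) * (r n - 1)) atTop (𝓝 (-1))) :
    ∃ c : ℝ, 0 < c ∧ Tendsto (fun n : ℕ => (n:ℝ) * b n) atTop (𝓝 c) := by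
  set g : ℕ → ℝ := fun k => ((k:ℝ) * (r k - 1) + 1) / k with hgdef
  have hB' : Tendsto (fun n : ℕ => ∑ k ∈ Finset.Icc k₀ n, g k) atTop (𝓝 L) := hB
  obtain ⟨N₀, hN₀⟩ := Metric.tendsto_atTop.mp h (1/2) (by norm_num)
  set N : ℕ := max (max N₀ (k₀ + 1)) 4 with hN
  have hN4 : 4 ≤ N := le_max_right _ _
  have hk₀N : k₀ ≤ N := le_trans (Nat.le_succ k₀) (le_trans (le_max_right _ _) (le_max_left _ _))
  have hfacts : ∀ n, N ≤ n → (1:ℝ)/2 ≤ r n ∧ |r n - 1| ≤ 2 / n := by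
    intro n hn
    have hn4 : (4:ℝ) ≤ n := by exact_mod_cast le_trans hN4 hn
    have hnpos : (0:ℝ) < n := by linarith
    have hd := hN₀ n (le_trans (le_trans (le_max_left _ _) (le_max_left _ _)) hn)
    rw [Real.dist_eq, sub_neg_eq_add] at hd
    obtain ⟨hd1, hd2⟩ := abs_lt.mp hd
    have habs : |r n - 1| ≤ 2 / n := by
      rw [le_div_iff₀ hnpos]
      have heq : |r n - 1| * n = |(n:ℝ) * (r n - 1)| := by
        rw [abs_mul, abs_of_pos hnpos]; ring
      rw [heq, abs_le]; constructor <;> linarith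
    refine ⟨?_, habs⟩
    obtain ⟨h1, h2⟩ := abs_le.mp habs
    have h3 : 2/(n:ℝ) ≤ 1/2 := by rw [div_le_iff₀ hnpos]; linarith
    linarith
  set e : ℕ → ℝ := fun n => (Real.log (1 + 1/n) - 1/n) + (Real.log (r n) - (r n - 1)) with he
  have hbound : ∀ n, N ≤ n → |e n| ≤ 10 / (n:ℝ)^2 := by
    intro n hn
    obtain ⟨hr12, hrn1⟩ := hfacts n hn
    have hn4 : (4:ℝ) ≤ n := by exact_mod_cast le_trans hN4 hn
    have hnpos : (0:ℝ) < n := by linarith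
    have b1 : |Real.log (1 + 1/(n:ℝ)) - (1/n)| ≤ 2 * (1/(n:ℝ))^2 := by
      have hh : (0:ℝ) ≤ 1/(n:ℝ) := by positivity
      have := log_approx10 (x := 1 + 1/(n:ℝ)) (by linarith)
      have heq : (1 + 1/(n:ℝ)) - 1 = 1/n := by ring
      rwa [heq] at this
    have b2 : |Real.log (r n) - (r n - 1)| ≤ 2 * (2/(n:ℝ))^2 := by
      have h1 := log_approx10 hr12
      have h2 : (r n - 1)^2 ≤ (2/(n:ℝ))^2 := by
        rw [← sq_abs]
        apply pow_le_pow_left₀ (abs_nonneg _) hrn1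
      nlinarith
    have hsum : 2 * (1/(n:ℝ))^2 + 2 * (2/(n:ℝ))^2 = 10 / (n:ℝ)^2 := by
      field_simp; ring
    calc |e n| ≤ |Real.log (1 + 1/(n:ℝ)) - (1/n)| + |Real.log (r n) - (r n - 1)| := by
          rw [he]; exact abs_add_le _ _
    _ ≤ 2 * (1/(n:ℝ))^2 + 2 * (2/(n:ℝ))^2 := add_le_add b1 b2
    _ = 10 / (n:ℝ)^2 := hsum
  have hesumm : Summable e := by
    apply summable_of_isBigO_nat (Real.summable_one_div_nat_pow.mpr one_lt_two)
    rw [Asymptotics.isBigO_iff]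
    refine ⟨10, ?_⟩
    filter_upwards [eventually_ge_atTop N] with n hn
    have h1 := hbound n hn
    have hnn : (0:ℝ) ≤ 1/(n:ℝ)^2 := by positivity
    rw [Real.norm_eq_abs, Real.norm_eq_abs, abs_of_nonneg hnn]
    calc |e n| ≤ 10/(n:ℝ)^2 := h1
    _ = 10 * (1/(n:ℝ)^2) := by ring
  set F : ℕ → ℝ := fun n => Real.log ((n:ℝ) * b n) with hF
  have hstep : ∀ n, N ≤ n → F (n+1) = F n + (g n + e n) := by
    intro n hn
    obtain ⟨hr12, hrn1⟩ := hfacts n hn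
    have hn4 : (4:ℝ) ≤ n := by exact_mod_cast le_trans hN4 hn
    have hnpos : (0:ℝ) < n := by linarith
    have hbn := hb n
    have hbn1 := hb (n+1)
    have hrpos : (0:ℝ) < r n := by linarith
    have key1 : ((n:ℝ)+1) * b (n+1) = ((n:ℝ) * b n) * ((1 + 1/n) * r n) := by
      rw [hrb n]; field_simp
    have hge : g n + e n = Real.log (1 + 1/(n:ℝ)) + Real.log (r n) := by
      have heq : ((n:ℝ)*(r n - 1)+1)/n = (r n - 1) + 1/n := by field_simp
      simp only [hgdef, he]
      rw [heq]; ring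
    rw [hge]
    have hlog : F (n+1) = Real.log ((n:ℝ) * b n) + (Real.log (1 + 1/(n:ℝ)) + Real.log (r n)) := by
      simp only [hF]
      push_cast
      rw [key1, Real.log_mul (ne_of_gt (mul_pos hnpos hbn)) (ne_of_gt (mul_pos (by positivity) hrpos)),
        Real.log_mul (by positivity) (ne_of_gt hrpos)]
    rw [hlog]
  have htel : ∀ n, N ≤ n → F n = F N + ∑ k ∈ Finset.Ico N n, (g k + e k) := by
    intro n hn
    induction n, hn using Nat.le_induction with
    | base => simp
    | succ n hn ih =>
      rw [Finset.sum_Ico_succ_top hn, hstep n hn, ih]; ring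
  -- convergence of the g-sums
  have h3 : Tendsto (fun n : ℕ => ∑ k ∈ Finset.Ico k₀ n, g k) atTop (𝓝 L) := by
    apply (hB'.comp (tendsto_sub_atTop_nat 1)).congr'
    filter_upwards [eventually_ge_atTop 1] with n hn
    simp only [Function.comp_apply]
    have h5 : n - 1 + 1 = n := by omega
    rw [← Finset.Ico_add_one_right_eq_Icc, h5]
  have hGN : Tendsto (fun n : ℕ => ∑ k ∈ Finset.Ico N n, g k) atTop
      (𝓝 (L - ∑ k ∈ Finset.Ico k₀ N, g k)) := by
    apply (h3.sub_const (∑ k ∈ Finset.Ico k₀ N, g k)).congr'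
    filter_upwards [eventually_ge_atTop N] with n hn
    rw [← Finset.sum_Ico_consecutive g hk₀N hn]; ring
  have hEN : Tendsto (fun n : ℕ => ∑ k ∈ Finset.Ico N n, e k) atTop
      (𝓝 ((∑' i, e i) - ∑ k ∈ Finset.range N, e k)) := by
    apply ((hesumm.hasSum.tendsto_sum_nat).sub_const (∑ k ∈ Finset.range N, e k)).congr'
    filter_upwards [eventually_ge_atTop N] with n hn
    rw [Finset.sum_Ico_eq_sub e hn]
  have hFt : Tendsto F atTop
      (𝓝 (F N + ((L - ∑ k ∈ Finset.Ico k₀ N, g k) + ((∑' i, e i) - ∑ k ∈ Finset.range N, e k)))) := by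
    apply (tendsto_const_nhds.add (hGN.add hEN)).congr'
    filter_upwards [eventually_ge_atTop N] with n hn
    rw [htel n hn]
    congr 1
    exact Finset.sum_add_distrib.symm
  refine ⟨Real.exp (F N + ((L - ∑ k ∈ Finset.Ico k₀ N, g k) +
    ((∑' i, e i) - ∑ k ∈ Finset.range N, e k))), Real.exp_pos _, ?_⟩
  apply ((Real.continuous_exp.tendsto _).comp hFt).congr'
  filter_upwards [eventually_ge_atTop 1] with n hn
  have hnpos : (0:ℝ) < n := by exact_mod_cast hn
  have hpos : 0 < (n:ℝ) * b n := mul_pos hnpos (hb n)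
  simp only [Function.comp_apply, hF]
  exact Real.exp_log hpos

theorem stmt_10 (a : ℕ → ℝ) (hne : ∀ n, a n ≠ 0)
    (h : Tendsto (fun n : ℕ => (n : ℝ) * (|a (n + 1) / a n| - 1)) atTop (𝓝 (-1)))
    (hB : ∃ (k₀ : ℕ) (L : ℝ),
      Tendsto (fun n : ℕ =>
        ∑ k ∈ Finset.Icc k₀ n, ((k : ℝ) * (|a (k + 1) / a k| - 1) + 1) / k)
        atTop (𝓝 L)) :
    (∃ c : ℝ, 0 < c ∧ Tendsto (fun n : ℕ => (n : ℝ) * |a n|) atTop (𝓝 c)) ∧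
      ¬ Summable (fun n => |a n|) := by
  obtain ⟨k₀, L, hB⟩ := hB
  have hb : ∀ n, 0 < |a n| := fun n => abs_pos.mpr (hne n)
  have hrb : ∀ n, |a (n+1)| = |a n| * |a (n+1) / a n| := by
    intro n
    rw [abs_div, mul_comm, div_mul_cancel₀ _ (ne_of_gt (hb n))]
  have hmain := key_lemma (fun n => |a n|) (fun n => |a (n+1) / a n|) hb hrb k₀ L hB h
  refine ⟨hmain, ?_⟩
  obtain ⟨c, hc, hct⟩ := hmain
  intro hs
  have hev : ∀ᶠ n : ℕ in atTop, c/2 < (n:ℝ) * |a n| := hct.eventually_const_lt (by linarith)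
  have hsum : Summable (fun n : ℕ => (n:ℝ)⁻¹) := by
    apply summable_of_isBigO_nat hs
    rw [Asymptotics.isBigO_iff]
    refine ⟨2/c, ?_⟩
    filter_upwards [hev, eventually_ge_atTop 1] with n h1 h2
    have hnpos : (0:ℝ) < n := by exact_mod_cast h2
    rw [Real.norm_eq_abs, Real.norm_eq_abs, abs_of_nonneg (by positivity), abs_abs]
    have h3 : (n:ℝ)⁻¹ * (c/2) < (n:ℝ)⁻¹ * ((n:ℝ) * |a n|) :=
      mul_lt_mul_of_pos_left h1 (by positivity)
    rw [← mul_assoc, inv_mul_cancel₀ (ne_of_gt hnpos), one_mul] at h3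
    calc (n:ℝ)⁻¹ = (2/c) * ((n:ℝ)⁻¹ * (c/2)) := by field_simp
    _ ≤ 2/c * |a n| := mul_le_mul_of_nonneg_left h3.le (by positivity)
  exact Real.not_summable_natCast_inv hsum
end

section
/- For a_n = ∏_{k=1}^n (2 − e^{1/k}), one has n(a_{n+1}/a_n − 1) → −1, n(n(a_{n+1}/a_n − 1) + 1) → 1/2 (in the sense that α(n)+1 ∼ 1/(2n)), and ∑ a_n diverges. -/
open Filter Topology

lemma exp_half_lt_two : Real.exp (1/2) < 2 := by
  have h : Real.exp (1/2) * Real.exp (1/2) = Real.exp 1 := by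
    rw [← Real.exp_add]; norm_num
  nlinarith [Real.exp_pos (1/2), Real.exp_one_lt_d9]

lemma factor_pos {k : ℕ} (hk : 2 ≤ k) : 0 < 2 - Real.exp (1/(k:ℝ)) := by
  have hk' : (2:ℝ) ≤ k := by exact_mod_cast hk
  have h1 : (1:ℝ)/k ≤ 1/2 := by
    apply div_le_div_of_nonneg_left <;> linarith
  have := Real.exp_le_exp.mpr h1
  linarith [exp_half_lt_two]

lemma factor_ne {k : ℕ} (hk : 1 ≤ k) : 2 - Real.exp (1/(k:ℝ)) ≠ 0 := by
  rcases eq_or_lt_of_le hk with h | h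
  · have : (k:ℝ) = 1 := by exact_mod_cast h.symm
    rw [this]
    intro hc
    nlinarith [Real.exp_one_gt_d9]
  · exact ne_of_gt (factor_pos h)

lemma exp_quad {x : ℝ} (hx0 : 0 ≤ x) (hx1 : x ≤ 1) :
    Real.exp x ≤ 1 + x + (3/4) * x^2 := by
  have hb := Real.exp_bound (x := x) (by rwa [abs_of_nonneg hx0]) (n := 2) (by norm_num)
  simp [Finset.sum_range_succ, abs_of_nonneg hx0] at hb
  rw [abs_le] at hb
  nlinarith [hb.2]

lemma exp_cubic {x : ℝ} (hx0 : 0 ≤ x) (hx1 : x ≤ 1) :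
    |Real.exp x - (1 + x + x^2/2)| ≤ x^3 := by
  have hb := Real.exp_bound (x := x) (by rwa [abs_of_nonneg hx0]) (n := 3) (by norm_num)
  simp [Finset.sum_range_succ, abs_of_nonneg hx0] at hb
  calc |Real.exp x - (1 + x + x^2/2)| ≤ x^3 * (4/(6*3)) := by
        convert hb using 2 <;> norm_num
    _ ≤ x^3 := by nlinarith [pow_nonneg hx0 3]

lemma factor_ge {k : ℕ} (hk : 3 ≤ k) :
    ((k:ℝ)-2)/((k:ℝ)-1) ≤ 2 - Real.exp (1/(k:ℝ)) := by
  have hy : (3:ℝ) ≤ k := by exact_mod_cast hk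
  have hpos : (0:ℝ) < k := by linarith
  have hx0 : 0 ≤ (1:ℝ)/k := by positivity
  have hx1 : (1:ℝ)/k ≤ 1 := by rw [div_le_one hpos]; linarith
  have h1 := exp_quad hx0 hx1
  have h2 : ((k:ℝ)-2)/((k:ℝ)-1) ≤ 1 - 1/(k:ℝ) - (3/4)*(1/(k:ℝ))^2 := by
    rw [div_le_iff₀ (by linarith)]
    have hne : (k:ℝ) ≠ 0 := ne_of_gt hpos
    field_simp
    nlinarith
  nlinarith [h1, h2]

noncomputable def Ee (n : ℕ) : ℝ :=
  Real.exp (1/((n:ℝ)+1)) - (1 + 1/((n:ℝ)+1) + (1/((n:ℝ)+1))^2/2)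

lemma Ee_bound (n : ℕ) : |Ee n| ≤ (1/((n:ℝ)+1))^3 := by
  have h0 : (0:ℝ) ≤ 1/((n:ℝ)+1) := by positivity
  have h1 : (1:ℝ)/((n:ℝ)+1) ≤ 1 := by
    rw [div_le_one (by positivity)]; linarith [Nat.cast_nonneg (α := ℝ) n]
  exact exp_cubic h0 h1

theorem stmt_12 (a : ℕ → ℝ)
    (ha : ∀ n, a n = ∏ k ∈ Finset.Icc 1 n, (2 - Real.exp (1 / (k : ℝ)))) :
    Tendsto (fun n : ℕ => (n : ℝ) * (a (n + 1) / a n - 1)) atTop (𝓝 (-1)) ∧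
      Tendsto (fun n : ℕ => (n : ℝ) * ((n : ℝ) * (a (n + 1) / a n - 1) + 1))
        atTop (𝓝 (1 / 2)) ∧
      ¬ Summable a := by
  have hane : ∀ n, a n ≠ 0 := by
    intro n
    rw [ha n]
    exact Finset.prod_ne_zero_iff.mpr (fun k hk => factor_ne (Finset.mem_Icc.mp hk).1)
  have hprod : ∀ n : ℕ, a (n+1) = a n * (2 - Real.exp (1/((n:ℝ)+1))) := by
    intro n
    rw [ha (n+1), ha n, Finset.prod_Icc_succ_top (Nat.le_add_left 1 n)]
    push_cast
    ring
  have hr : ∀ n : ℕ, a (n+1) / a n - 1 = 1 - Real.exp (1/((n:ℝ)+1)) := by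
    intro n
    rw [hprod n, mul_comm, mul_div_assoc, div_self (hane n)]
    ring
  -- basic limits
  have t0 : Tendsto (fun n : ℕ => 1/((n:ℝ)+1)) atTop (𝓝 0) :=
    tendsto_one_div_add_atTop_nhds_zero_nat
  have t1 : Tendsto (fun n : ℕ => (n:ℝ) * (1/((n:ℝ)+1))) atTop (𝓝 1) := by
    have heq : (fun n : ℕ => (n:ℝ) * (1/((n:ℝ)+1))) = fun n : ℕ => 1 - 1/((n:ℝ)+1) := by
      funext n
      have h : ((n:ℝ)+1) ≠ 0 := by positivity
      field_simp
      ring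
    rw [heq]
    simpa using tendsto_const_nhds.sub t0
  have tE1 : Tendsto (fun n : ℕ => (n:ℝ) * Ee n) atTop (𝓝 0) := by
    refine squeeze_zero_norm
      (a := fun n : ℕ => ((n:ℝ) * (1/((n:ℝ)+1))) * ((1/((n:ℝ)+1)) * (1/((n:ℝ)+1)))) ?_ ?_
    · intro n
      rw [Real.norm_eq_abs, abs_mul, abs_of_nonneg (Nat.cast_nonneg n)]
      calc (n:ℝ) * |Ee n| ≤ (n:ℝ) * (1/((n:ℝ)+1))^3 :=
            mul_le_mul_of_nonneg_left (Ee_bound n) (Nat.cast_nonneg n)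
        _ = ((n:ℝ) * (1/((n:ℝ)+1))) * ((1/((n:ℝ)+1)) * (1/((n:ℝ)+1))) := by ring
    · simpa using t1.mul (t0.mul t0)
  have tE2 : Tendsto (fun n : ℕ => (n:ℝ)^2 * Ee n) atTop (𝓝 0) := by
    refine squeeze_zero_norm
      (a := fun n : ℕ => ((n:ℝ) * (1/((n:ℝ)+1))) * (((n:ℝ) * (1/((n:ℝ)+1))) * (1/((n:ℝ)+1)))) ?_ ?_
    · intro n
      rw [Real.norm_eq_abs, abs_mul, abs_of_nonneg (by positivity : (0:ℝ) ≤ (n:ℝ)^2)]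
      calc (n:ℝ)^2 * |Ee n| ≤ (n:ℝ)^2 * (1/((n:ℝ)+1))^3 :=
            mul_le_mul_of_nonneg_left (Ee_bound n) (by positivity)
        _ = ((n:ℝ) * (1/((n:ℝ)+1))) * (((n:ℝ) * (1/((n:ℝ)+1))) * (1/((n:ℝ)+1))) := by ring
    · simpa using t1.mul (t1.mul t0)
  refine ⟨?_, ?_, ?_⟩
  · have key : ∀ n : ℕ, (n:ℝ) * (a (n+1)/a n - 1) =
        -((n:ℝ) * (1/((n:ℝ)+1))) - ((n:ℝ) * (1/((n:ℝ)+1))) * (1/((n:ℝ)+1))/2 - (n:ℝ) * Ee n := by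
      intro n
      rw [hr n]
      simp only [Ee]
      ring
    have hlim := (t1.neg.sub ((t1.mul t0).div_const 2)).sub tE1
    rw [show (-1 - 1*0/2 - 0 : ℝ) = -1 by norm_num] at hlim
    exact hlim.congr fun n => (key n).symm
  · have key : ∀ n : ℕ, (n:ℝ) * ((n:ℝ) * (a (n+1)/a n - 1) + 1) =
        ((n:ℝ) * (1/((n:ℝ)+1))) - ((n:ℝ) * (1/((n:ℝ)+1))) * ((n:ℝ) * (1/((n:ℝ)+1)))/2
          - (n:ℝ)^2 * Ee n := by
      intro n
      rw [hr n]
      have h : ((n:ℝ)+1) ≠ 0 := by positivity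
      simp only [Ee]
      field_simp
      ring
    have hlim := (t1.sub ((t1.mul t1).div_const 2)).sub tE2
    rw [show (1 - 1*1/2 - 0 : ℝ) = 1/2 by norm_num] at hlim
    exact hlim.congr fun n => (key n).symm
  · -- divergence
    have hstep : ∀ n : ℕ, 2 ≤ n → |a 2| ≤ |a n| * ((n:ℝ) - 1) := by
      intro n hn
      induction n with
      | zero => omega
      | succ m ih =>
        rcases Nat.lt_or_ge m 2 with hm | hm
        · interval_cases m
          · omega
          · norm_num
        · have ihm := ih hm
          have hm' : (2:ℝ) ≤ m := by exact_mod_cast hm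
          have hpos : 0 < 2 - Real.exp (1/((m:ℝ)+1)) := by
            have := factor_pos (k := m+1) (by omega)
            push_cast at this
            convert this using 3
          have hge : ((m:ℝ)-1)/(m:ℝ) ≤ 2 - Real.exp (1/((m:ℝ)+1)) := by
            have := factor_ge (k := m+1) (by omega)
            push_cast at this
            convert this using 2 <;> push_cast <;> ring
          have habs : |a (m+1)| = |a m| * (2 - Real.exp (1/((m:ℝ)+1))) := by
            rw [hprod m, abs_mul, abs_of_pos hpos]
          have hcast : ((m+1:ℕ):ℝ) - 1 = (m:ℝ) := by push_cast; ring
          rw [habs, hcast]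
          have ham : 0 ≤ |a m| := abs_nonneg _
          have hdiv : ((m:ℝ)-1)/(m:ℝ) * (m:ℝ) = (m:ℝ) - 1 := by
            field_simp
          nlinarith [mul_le_mul_of_nonneg_left hge ham]
    intro hs
    have habs := hs.abs
    have h2 : Summable (fun n : ℕ => |a (n+2)|) := (summable_nat_add_iff (f := fun n => |a n|) 2).mpr habs
    have hc : 0 < |a 2| := abs_pos.mpr (hane 2)
    have hcomp : Summable (fun n : ℕ => |a 2| * (1/((n:ℝ)+1))) := by
      apply h2.of_nonneg_of_le (fun n => by positivity)
      intro n
      have hst := hstep (n+2) (by omega)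
      have hcast : ((n+2:ℕ):ℝ) - 1 = (n:ℝ) + 1 := by push_cast; ring
      rw [hcast] at hst
      rw [mul_one_div, div_le_iff₀ (by positivity)]
      exact hst
    have hsum1 : Summable (fun n : ℕ => 1/((n:ℝ)+1)) := by
      have := hcomp.mul_left (|a 2|)⁻¹
      simpa [← mul_assoc, inv_mul_cancel₀ (ne_of_gt hc)] using this
    apply Real.not_summable_one_div_natCast
    have := (summable_nat_add_iff (f := fun n : ℕ => 1/(n:ℝ)) 1).mp
    apply this
    convert hsum1 using 2 with n
    · rfl
    · push_cast
      rfl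
end

section
/- Suppose (a_n) is a sequence of positive reals such that α(n) := n(a_{n+1}/a_n − 1) satisfies α ≤ α(n) ≤ β for all n ≥ N (with α, β real constants). Then there exist positive constants A, B and N' such that A n^α ≤ a_n ≤ B n^β for all n ≥ N'. -/
open Filter Topology


private lemma stmt14_aux_pos (α k : ℝ) (hα : 0 ≤ α) (hk0 : 0 < k) (hka : 0 < k + α) :
    α ^ 2 / (k * (k + α)) ≤ (2 * α + 4 * α ^ 2) / (k * (k + 1)) := by
  rw [div_le_div_iff₀ (by positivity) (by positivity)]
  nlinarith [mul_nonneg hα (mul_pos hk0 hk0).le, mul_nonneg (sq_nonneg α) hk0.le,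
    mul_nonneg (sq_nonneg α) (mul_pos hk0 hk0).le,
    mul_nonneg (mul_nonneg (mul_nonneg hα hα) hα) hk0.le]

private lemma stmt14_aux_neg (α k : ℝ) (hα : α < 0) (hk2 : 2 ≤ k) (hka2 : 0 ≤ k + 2 * α) :
    α * (α - 1) / ((k + 1) * (k + α)) ≤ (-(2 * α) + 4 * α ^ 2) / (k * (k + 1)) := by
  have hk0 : 0 < k := by linarith
  have hka : 0 < k + α := by nlinarith
  rw [div_le_div_iff₀ (by positivity) (by positivity)]
  nlinarith [mul_nonneg (mul_nonneg (by linarith : (0:ℝ) ≤ k + 1) (neg_nonneg.mpr hα.le)) hka2,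
    mul_nonneg (mul_nonneg (by linarith : (0:ℝ) ≤ k + 1) (sq_nonneg α))
      (by linarith : (0:ℝ) ≤ 3 * k + 4 * α)]

theorem stmt_14 (a : ℕ → ℝ) (hpos : ∀ n, 0 < a n) (α β : ℝ) (N : ℕ)
    (h : ∀ n ≥ N, α ≤ (n : ℝ) * (a (n + 1) / a n - 1) ∧
      (n : ℝ) * (a (n + 1) / a n - 1) ≤ β) :
    ∃ (A B : ℝ) (N' : ℕ), 0 < A ∧ 0 < B ∧
      ∀ n ≥ N', A * (n : ℝ) ^ α ≤ a n ∧ a n ≤ B * (n : ℝ) ^ β := by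
  obtain ⟨M, hMN, hM2, hMα⟩ : ∃ M : ℕ, N ≤ M ∧ 2 ≤ M ∧ 2 * |α| ≤ (M : ℝ) := by
    refine ⟨max N (2 + ⌈2 * |α|⌉₊), le_max_left _ _,
      le_trans (by omega) (le_max_right N (2 + ⌈2 * |α|⌉₊)), ?_⟩
    have h1 : (2 : ℝ) * |α| ≤ (⌈2 * |α|⌉₊ : ℕ) := Nat.le_ceil _
    have h2 : (⌈2 * |α|⌉₊ : ℕ) ≤ max N (2 + ⌈2 * |α|⌉₊) :=
      le_trans (by omega) (le_max_right N (2 + ⌈2 * |α|⌉₊))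
    calc 2 * |α| ≤ ((⌈2 * |α|⌉₊ : ℕ) : ℝ) := h1
      _ ≤ _ := Nat.cast_le.mpr h2
  obtain ⟨C₁, hC₁def⟩ : ∃ c : ℝ, c = 2 * |α| + 4 * α ^ 2 := ⟨_, rfl⟩
  obtain ⟨C₂, hC₂def⟩ : ∃ c : ℝ, c = |β| := ⟨_, rfl⟩
  have hC₁0 : 0 ≤ C₁ := by rw [hC₁def]; positivity
  have hC₂0 : 0 ≤ C₂ := by rw [hC₂def]; exact abs_nonneg β
  -- per-term bounds
  have key : ∀ k, M ≤ k →
      (α * (Real.log (k + 1) - Real.log k) + C₁ / (k + 1) - C₁ / k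
          ≤ Real.log (a (k + 1)) - Real.log (a k)) ∧
      (Real.log (a (k + 1)) - Real.log (a k)
          ≤ β * (Real.log (k + 1) - Real.log k) - C₂ / (k + 1) + C₂ / k) := by
    intro k hk
    have hk2 : (2 : ℝ) ≤ (k : ℝ) := by
      have : (2 : ℕ) ≤ k := le_trans hM2 hk
      exact_mod_cast this
    have hkα : 2 * |α| ≤ (k : ℝ) := le_trans hMα (Nat.cast_le.mpr hk)
    have hk0 : (0 : ℝ) < (k : ℝ) := by linarith
    have hk10 : (0 : ℝ) < (k : ℝ) + 1 := by linarith
    obtain ⟨h1, h2⟩ := h k (le_trans hMN hk)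
    have hak := hpos k
    have hak1 := hpos (k + 1)
    have hr0 : 0 < a (k + 1) / a k := div_pos hak1 hak
    have hub : a (k + 1) / a k - 1 ≤ β / k := by
      rw [le_div_iff₀ hk0]; linarith [h2]
    have hlb : α / k ≤ a (k + 1) / a k - 1 := by
      rw [div_le_iff₀ hk0]; linarith [h1]
    have habs1 : -|α| ≤ α := neg_abs_le α
    have habs2 : α ≤ |α| := le_abs_self α
    have hαk : (1 : ℝ) / 2 ≤ 1 + α / k := by
      have : -(1 / 2 : ℝ) ≤ α / (k : ℝ) := by
        rw [le_div_iff₀ hk0]; nlinarith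
      linarith
    have hka : (0 : ℝ) < (k : ℝ) + α := by nlinarith
    -- log(k+1) - log k bounds
    have hldiv : Real.log (((k : ℝ) + 1) / k) = Real.log ((k : ℝ) + 1) - Real.log k :=
      Real.log_div (by positivity) (ne_of_gt hk0)
    have hldiv2 : Real.log ((k : ℝ) / (k + 1)) = Real.log (k : ℝ) - Real.log ((k : ℝ) + 1) :=
      Real.log_div (ne_of_gt hk0) (by positivity)
    have hL1 : Real.log ((k : ℝ) + 1) - Real.log k ≤ 1 / k := by
      have hle := Real.log_le_sub_one_of_pos (show (0:ℝ) < ((k : ℝ) + 1) / k by positivity)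
      have hid : ((k : ℝ) + 1) / k - 1 = 1 / k := by field_simp; ring
      rw [hldiv, hid] at hle; exact hle
    have hL2 : 1 / ((k : ℝ) + 1) ≤ Real.log ((k : ℝ) + 1) - Real.log k := by
      have hle := Real.log_le_sub_one_of_pos (show (0:ℝ) < (k : ℝ) / (k + 1) by positivity)
      have hid : (k : ℝ) / (k + 1) - 1 = -(1 / ((k : ℝ) + 1)) := by field_simp; ring
      rw [hldiv2, hid] at hle; linarith
    -- ratio log bounds
    have hrlog : Real.log (a (k + 1) / a k) = Real.log (a (k + 1)) - Real.log (a k) :=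
      Real.log_div (ne_of_gt hak1) (ne_of_gt hak)
    have hup : Real.log (a (k + 1)) - Real.log (a k) ≤ β / k := by
      have := Real.log_le_sub_one_of_pos hr0
      rw [hrlog] at this; linarith
    have hlow : 1 - 1 / (1 + α / k) ≤ Real.log (a (k + 1)) - Real.log (a k) := by
      have hmono : Real.log (1 + α / k) ≤ Real.log (a (k + 1) / a k) :=
        Real.log_le_log (by linarith) (by linarith)
      have hinv := Real.log_le_sub_one_of_pos (show (0:ℝ) < (1 + α / k)⁻¹ by positivity)
      rw [Real.log_inv] at hinv
      have : 1 - 1 / (1 + α / k) ≤ Real.log (1 + α / k) := by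
        rw [one_div]; linarith
      rw [hrlog] at hmono; linarith
    constructor
    · -- lower bound
      have heq : 1 - 1 / (1 + α / (k : ℝ)) = α / ((k : ℝ) + α) := by
        field_simp; ring
      rw [heq] at hlow
      have hid : C₁ / ((k : ℝ) + 1) - C₁ / k = -(C₁ / ((k : ℝ) * ((k : ℝ) + 1))) := by
        field_simp; ring
      rcases le_or_gt 0 α with hα | hα
      · have s1 : α * (Real.log ((k : ℝ) + 1) - Real.log k) ≤ α / k := by
          calc α * (Real.log ((k : ℝ) + 1) - Real.log k) ≤ α * (1 / k) :=
                mul_le_mul_of_nonneg_left hL1 hα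
            _ = α / k := by ring
        have s2 : α / (k : ℝ) - α / ((k : ℝ) + α) = α ^ 2 / ((k : ℝ) * ((k : ℝ) + α)) := by
          field_simp; ring
        have s3 : α ^ 2 / ((k : ℝ) * ((k : ℝ) + α)) ≤ C₁ / ((k : ℝ) * ((k : ℝ) + 1)) := by
          rw [hC₁def, abs_of_nonneg hα]
          exact stmt14_aux_pos α k hα hk0 hka
        linarith [hid]
      · have s1 : α * (Real.log ((k : ℝ) + 1) - Real.log k) ≤ α / ((k : ℝ) + 1) := by
          calc α * (Real.log ((k : ℝ) + 1) - Real.log k) ≤ α * (1 / ((k : ℝ) + 1)) := by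
                apply mul_le_mul_of_nonpos_left hL2 (le_of_lt hα)
            _ = α / ((k : ℝ) + 1) := by ring
        have s2 : α / ((k : ℝ) + 1) - α / ((k : ℝ) + α) = α * (α - 1) / (((k : ℝ) + 1) * ((k : ℝ) + α)) := by
          field_simp; ring
        have s3 : α * (α - 1) / (((k : ℝ) + 1) * ((k : ℝ) + α)) ≤ C₁ / ((k : ℝ) * ((k : ℝ) + 1)) := by
          have ha2 : (0:ℝ) ≤ (k : ℝ) + 2 * α := by
            have habs : |α| = -α := abs_of_neg hα
            linarith [hkα]
          have := stmt14_aux_neg α k hα hk2 ha2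
          rw [hC₁def, abs_of_neg hα]
          convert this using 2
          ring
        linarith [hid]
    · -- upper bound
      have hid : -(C₂ / ((k : ℝ) + 1)) + C₂ / k = C₂ / ((k : ℝ) * ((k : ℝ) + 1)) := by
        field_simp; ring
      rcases abs_cases β with ⟨hb, hb'⟩ | ⟨hb, hb'⟩
      · have hmul : β * (1 / ((k:ℝ) + 1)) ≤ β * (Real.log ((k:ℝ) + 1) - Real.log k) :=
          mul_le_mul_of_nonneg_left hL2 hb'
        rw [hC₂def, hb]
        have e2 : β / ((k:ℝ) + 1) = β * (1 / ((k:ℝ) + 1)) := by ring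
        have e3 : β / (k:ℝ) = β * (1 / (k:ℝ)) := by ring
        have hup' : Real.log (a (k + 1)) - Real.log (a k) ≤ β * (1 / (k:ℝ)) := by
          rw [e3] at hup; exact hup
        rw [e2, e3]
        linarith [hup', hmul]
      · have hk1le : (1:ℝ) / ((k:ℝ) + 1) ≤ 1 / (k:ℝ) := by
          apply one_div_le_one_div_of_le hk0; linarith
        have hmul : β * (1 / (k:ℝ)) ≤ β * (Real.log ((k:ℝ) + 1) - Real.log k) :=
          mul_le_mul_of_nonpos_left hL1 (le_of_lt hb')
        have hmul2 : β * (1 / (k:ℝ)) ≤ β * (1 / ((k:ℝ) + 1)) :=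
          mul_le_mul_of_nonpos_left hk1le (le_of_lt hb')
        rw [hC₂def, hb]
        have e2 : -β / ((k:ℝ) + 1) = -(β * (1 / ((k:ℝ) + 1))) := by ring
        have e3 : -β / (k:ℝ) = -(β * (1 / (k:ℝ))) := by ring
        have hup' : Real.log (a (k + 1)) - Real.log (a k) ≤ β * (1 / (k:ℝ)) := by
          have e1 : β / (k:ℝ) = β * (1 / (k:ℝ)) := by ring
          rw [e1] at hup; exact hup
        rw [e2, e3]
        linarith [hup', hmul, hmul2]
  -- telescoping
  have tel : ∀ (f : ℕ → ℝ) (n : ℕ), M ≤ n →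
      ∑ i ∈ Finset.Ico M n, (f (i + 1) - f i) = f n - f M := by
    intro f n hn
    rw [Finset.sum_Ico_eq_sub _ hn, Finset.sum_range_sub, Finset.sum_range_sub]; ring
  have hsum : ∀ n, M ≤ n →
      (α * Real.log n + C₁ / n) - (α * Real.log M + C₁ / M)
          ≤ Real.log (a n) - Real.log (a M) ∧
      Real.log (a n) - Real.log (a M)
          ≤ (β * Real.log n - C₂ / n) - (β * Real.log M - C₂ / M) := by
    intro n hn
    have e0 : ∑ i ∈ Finset.Ico M n, (Real.log (a (i + 1)) - Real.log (a i))
        = Real.log (a n) - Real.log (a M) := tel (fun i => Real.log (a i)) n hn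
    constructor
    · have e1 : ∑ i ∈ Finset.Ico M n,
          ((α * Real.log ((i + 1 : ℕ) : ℝ) + C₁ / ((i + 1 : ℕ) : ℝ))
            - (α * Real.log (i : ℝ) + C₁ / (i : ℝ)))
          = (α * Real.log n + C₁ / n) - (α * Real.log M + C₁ / M) :=
        tel (fun i => α * Real.log (i : ℝ) + C₁ / (i : ℝ)) n hn
      have hle : ∑ i ∈ Finset.Ico M n,
          ((α * Real.log ((i + 1 : ℕ) : ℝ) + C₁ / ((i + 1 : ℕ) : ℝ))
            - (α * Real.log (i : ℝ) + C₁ / (i : ℝ)))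
          ≤ ∑ i ∈ Finset.Ico M n, (Real.log (a (i + 1)) - Real.log (a i)) := by
        apply Finset.sum_le_sum
        intro i hi
        have hiM : M ≤ i := (Finset.mem_Ico.mp hi).1
        have hk := (key i hiM).1
        push_cast
        push_cast at hk
        linarith
      rw [e1, e0] at hle
      exact hle
    · have e1 : ∑ i ∈ Finset.Ico M n,
          ((β * Real.log ((i + 1 : ℕ) : ℝ) - C₂ / ((i + 1 : ℕ) : ℝ))
            - (β * Real.log (i : ℝ) - C₂ / (i : ℝ)))
          = (β * Real.log n - C₂ / n) - (β * Real.log M - C₂ / M) :=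
        tel (fun i => β * Real.log (i : ℝ) - C₂ / (i : ℝ)) n hn
      have hle : ∑ i ∈ Finset.Ico M n, (Real.log (a (i + 1)) - Real.log (a i))
          ≤ ∑ i ∈ Finset.Ico M n,
          ((β * Real.log ((i + 1 : ℕ) : ℝ) - C₂ / ((i + 1 : ℕ) : ℝ))
            - (β * Real.log (i : ℝ) - C₂ / (i : ℝ))) := by
        apply Finset.sum_le_sum
        intro i hi
        have hiM : M ≤ i := (Finset.mem_Ico.mp hi).1
        have hk := (key i hiM).2
        push_cast
        push_cast at hk
        linarith
      rw [e1, e0] at hle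
      exact hle
  have hM0 : (0 : ℝ) < (M : ℝ) := by
    have : (0 : ℕ) < M := by omega
    exact_mod_cast this
  have hM1 : (1 : ℝ) ≤ (M : ℝ) := by
    have : (1 : ℕ) ≤ M := by omega
    exact_mod_cast this
  refine ⟨Real.exp (Real.log (a M) - α * Real.log M - C₁),
    Real.exp (Real.log (a M) - β * Real.log M + C₂), M, Real.exp_pos _, Real.exp_pos _, ?_⟩
  intro n hn
  have hn0 : (0 : ℝ) < (n : ℝ) := by
    have : (0 : ℕ) < n := by omega
    exact_mod_cast this
  obtain ⟨hlo, hhi⟩ := hsum n hn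
  have hCn1 : 0 ≤ C₁ / (n : ℝ) := by positivity
  have hCM1 : C₁ / (M : ℝ) ≤ C₁ := by
    rw [div_le_iff₀ hM0]
    linarith [mul_le_mul_of_nonneg_left hM1 hC₁0]
  have hCn2 : 0 ≤ C₂ / (n : ℝ) := by positivity
  have hCM2 : C₂ / (M : ℝ) ≤ C₂ := by
    rw [div_le_iff₀ hM0]
    linarith [mul_le_mul_of_nonneg_left hM1 hC₂0]
  have hrp : (n : ℝ) ^ α = Real.exp (Real.log n * α) := Real.rpow_def_of_pos hn0 α
  have hrpβ : (n : ℝ) ^ β = Real.exp (Real.log n * β) := Real.rpow_def_of_pos hn0 β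
  have han : a n = Real.exp (Real.log (a n)) := (Real.exp_log (hpos n)).symm
  constructor
  · rw [hrp, ← Real.exp_add, han, Real.exp_le_exp]
    linarith
  · rw [hrpβ, ← Real.exp_add, han, Real.exp_le_exp]
    linarith
end

section
/- Suppose (a_n) is a sequence of positive reals with α ≤ n(a_{n+1}/a_n − 1) ≤ β for all n ≥ N. Then for every x > 1, x^α ≤ liminf_{t→∞} a_{⌊xt⌋}/a_{⌊t⌋} and limsup_{t→∞} a_{⌊xt⌋}/a_{⌊t⌋} ≤ x^β. -/
open Filter Topology

private lemma one_sub_inv_le_log_aux {y : ℝ} (hy : 0 < y) : 1 - 1/y ≤ Real.log y := by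
  have h := Real.log_le_sub_one_of_pos (inv_pos.mpr hy)
  rw [Real.log_inv] at h
  rw [one_div]
  linarith

private lemma tele_aux (g : ℕ → ℝ) {t m : ℕ} (h : t ≤ m) :
    ∑ k ∈ Finset.Ico t m, (g (k+1) - g k) = g m - g t := by
  rw [Finset.sum_Ico_eq_sub _ h, Finset.sum_range_sub, Finset.sum_range_sub]
  ring

private lemma rat_tendsto_aux (x c₁ c₂ : ℝ) :
    Tendsto (fun t : ℕ => (x * t + c₁) / ((t:ℝ) + c₂)) atTop (𝓝 x) := by
  have hden : Tendsto (fun t : ℕ => (t:ℝ) + c₂) atTop atTop :=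
    tendsto_atTop_add_const_right _ _ tendsto_natCast_atTop_atTop
  have h0 : Tendsto (fun t : ℕ => (c₁ - x * c₂) / ((t:ℝ) + c₂)) atTop (𝓝 0) :=
    Tendsto.div_atTop tendsto_const_nhds hden
  have h1 := h0.const_add x
  rw [add_zero] at h1
  refine Tendsto.congr' ?_ h1
  filter_upwards [hden.eventually_gt_atTop 0] with t ht
  field_simp
  ring

private lemma log_shift_aux {x : ℝ} (hx : 1 < x) (c : ℝ) :
    Tendsto (fun t : ℕ => Real.log ((⌊x * (t:ℝ)⌋₊ : ℝ) + c) - Real.log ((t:ℝ) + c))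
      atTop (𝓝 (Real.log x)) := by
  have hx0 : (0:ℝ) < x := lt_trans one_pos hx
  have hden : Tendsto (fun t : ℕ => (t:ℝ) + c) atTop atTop :=
    tendsto_atTop_add_const_right _ _ tendsto_natCast_atTop_atTop
  have hev : ∀ᶠ t : ℕ in atTop, 0 < (t:ℝ) + c := hden.eventually_gt_atTop 0
  have htm : ∀ t : ℕ, t ≤ ⌊x * (t:ℝ)⌋₊ := by
    intro t
    refine Nat.le_floor ?_
    nlinarith [Nat.cast_nonneg (α := ℝ) t]
  have hr : Tendsto (fun t : ℕ => ((⌊x * (t:ℝ)⌋₊ : ℝ) + c) / ((t:ℝ) + c)) atTop (𝓝 x) := by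
    refine tendsto_of_tendsto_of_tendsto_of_le_of_le' (rat_tendsto_aux x (c - 1) c)
      (rat_tendsto_aux x c c) ?_ ?_
    · filter_upwards [hev] with t ht
      have h1 : x * t - 1 < (⌊x * (t:ℝ)⌋₊ : ℝ) := Nat.sub_one_lt_floor _
      exact (div_le_div_iff_of_pos_right ht).mpr (by linarith)
    · filter_upwards [hev] with t ht
      have h2 : (⌊x * (t:ℝ)⌋₊ : ℝ) ≤ x * t :=
        Nat.floor_le (by positivity)
      exact (div_le_div_iff_of_pos_right ht).mpr (by linarith)
  have hcont := (Real.continuousAt_log (ne_of_gt hx0)).tendsto.comp hr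
  refine Tendsto.congr' ?_ hcont
  filter_upwards [hev] with t ht
  have hm : (0:ℝ) < (⌊x * (t:ℝ)⌋₊ : ℝ) + c := by
    have : (t:ℝ) ≤ (⌊x * (t:ℝ)⌋₊ : ℝ) := Nat.cast_le.mpr (htm t)
    linarith
  simp only [Function.comp_apply]
  rw [Real.log_div (ne_of_gt hm) (ne_of_gt ht)]

private lemma sum_inv_shift_tendsto_aux {x : ℝ} (hx : 1 < x) (c : ℝ) :
    Tendsto (fun t : ℕ => ∑ k ∈ Finset.Ico t ⌊x * (t:ℝ)⌋₊, 1/((k:ℝ) + c))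
      atTop (𝓝 (Real.log x)) := by
  have htm : ∀ t : ℕ, t ≤ ⌊x * (t:ℝ)⌋₊ := by
    intro t
    refine Nat.le_floor ?_
    nlinarith [Nat.cast_nonneg (α := ℝ) t]
  refine tendsto_of_tendsto_of_tendsto_of_le_of_le' (log_shift_aux hx c)
    (log_shift_aux hx (c - 1)) ?_ ?_
  · -- log(m+c) - log(t+c) ≤ ∑ 1/(k+c)
    filter_upwards [tendsto_natCast_atTop_atTop.eventually_ge_atTop (2 - c)] with t ht
    rw [← tele_aux (fun k => Real.log ((k:ℝ) + c)) (htm t)]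
    apply Finset.sum_le_sum
    intro k hk
    have hk' : (t:ℝ) ≤ (k:ℝ) := Nat.cast_le.mpr (Finset.mem_Ico.mp hk).1
    have hkc : (0:ℝ) < (k:ℝ) + c := by linarith
    have h1 : (0:ℝ) < (k:ℝ) + 1 + c := by linarith
    have hlog := Real.log_le_sub_one_of_pos (div_pos h1 hkc)
    rw [Real.log_div (ne_of_gt h1) (ne_of_gt hkc)] at hlog
    have heq : ((k:ℝ) + 1 + c)/((k:ℝ) + c) - 1 = 1/((k:ℝ) + c) := by
      field_simp
      ring
    push_cast
    linarith [hlog, heq]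
  · -- ∑ 1/(k+c) ≤ log(m+c-1) - log(t+c-1)
    filter_upwards [tendsto_natCast_atTop_atTop.eventually_ge_atTop (2 - c)] with t ht
    rw [← tele_aux (fun k => Real.log ((k:ℝ) + (c - 1))) (htm t)]
    apply Finset.sum_le_sum
    intro k hk
    have hk' : (t:ℝ) ≤ (k:ℝ) := Nat.cast_le.mpr (Finset.mem_Ico.mp hk).1
    have hkc : (0:ℝ) < (k:ℝ) + c := by linarith
    have h1 : (0:ℝ) < (k:ℝ) + (c - 1) := by linarith
    have hlog := one_sub_inv_le_log_aux (div_pos hkc h1)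
    rw [Real.log_div (ne_of_gt hkc) (ne_of_gt h1)] at hlog
    have heq : 1 - 1/(((k:ℝ) + c)/((k:ℝ) + (c - 1))) = 1/((k:ℝ) + c) := by
      rw [one_div_div]
      field_simp
      ring
    push_cast
    have : (k:ℝ) + 1 + (c - 1) = (k:ℝ) + c := by ring
    rw [this]
    linarith [hlog, heq]

theorem stmt_15 (a : ℕ → ℝ) (hpos : ∀ n, 0 < a n) (α β : ℝ) (N : ℕ)
    (h : ∀ n ≥ N, α ≤ (n : ℝ) * (a (n + 1) / a n - 1) ∧
      (n : ℝ) * (a (n + 1) / a n - 1) ≤ β) :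
    ∀ x : ℝ, 1 < x →
      x ^ α ≤ Filter.liminf (fun t : ℕ => a ⌊x * (t : ℝ)⌋₊ / a t) atTop ∧
      Filter.limsup (fun t : ℕ => a ⌊x * (t : ℝ)⌋₊ / a t) atTop ≤ x ^ β := by
  intro x hx
  have hx0 : (0:ℝ) < x := by linarith
  have htm : ∀ t : ℕ, t ≤ ⌊x * (t:ℝ)⌋₊ := by
    intro t
    refine Nat.le_floor ?_
    nlinarith [Nat.cast_nonneg (α := ℝ) t]
  -- key eventual sandwich
  have hkey : ∀ᶠ t : ℕ in atTop,
      Real.exp (α * ∑ k ∈ Finset.Ico t ⌊x * (t:ℝ)⌋₊, 1/((k:ℝ) + α)) ≤ a ⌊x * (t:ℝ)⌋₊ / a t ∧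
      a ⌊x * (t:ℝ)⌋₊ / a t ≤ Real.exp (β * ∑ k ∈ Finset.Ico t ⌊x * (t:ℝ)⌋₊, 1/((k:ℝ) + 0)) := by
    filter_upwards [eventually_ge_atTop N,
      tendsto_natCast_atTop_atTop.eventually_ge_atTop (|α| + 1)] with t htN htα
    have hf0 : 0 < a ⌊x * (t:ℝ)⌋₊ / a t := div_pos (hpos _) (hpos _)
    have hlogf : Real.log (a ⌊x * (t:ℝ)⌋₊ / a t)
        = ∑ k ∈ Finset.Ico t ⌊x * (t:ℝ)⌋₊, (Real.log (a (k+1)) - Real.log (a k)) := by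
      rw [tele_aux (fun k => Real.log (a k)) (htm t),
        Real.log_div (ne_of_gt (hpos _)) (ne_of_gt (hpos _))]
    constructor
    · -- lower bound
      rw [← Real.exp_log hf0]
      apply Real.exp_le_exp.mpr
      rw [hlogf, Finset.mul_sum]
      apply Finset.sum_le_sum
      intro k hk
      have hktn : t ≤ k := (Finset.mem_Ico.mp hk).1
      have hk' : (|α| + 1 : ℝ) ≤ (k:ℝ) := le_trans htα (Nat.cast_le.mpr hktn)
      have hk0 : (0:ℝ) < (k:ℝ) := by
        have := abs_nonneg α; linarith
      have hkα : (0:ℝ) < (k:ℝ) + α := by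
        have := neg_abs_le α; linarith
      obtain ⟨h1, _⟩ := h k (le_trans htN hktn)
      have hr0 : 0 < a (k+1) / a k := div_pos (hpos _) (hpos _)
      have hge : 1 + α/(k:ℝ) ≤ a (k+1) / a k := by
        have : α / (k:ℝ) ≤ a (k+1) / a k - 1 := by
          rw [div_le_iff₀ hk0]
          linarith [h1, mul_comm ((k:ℝ)) (a (k+1) / a k - 1)]
        linarith
      have heq : 1 + α/(k:ℝ) = ((k:ℝ) + α)/(k:ℝ) := by field_simp
      have hpos1 : (0:ℝ) < 1 + α/(k:ℝ) := by rw [heq]; exact div_pos hkα hk0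
      have hmono := Real.log_le_log hpos1 hge
      have hlb := one_sub_inv_le_log_aux hpos1
      have heq2 : 1 - 1/(1 + α/(k:ℝ)) = α * (1/((k:ℝ) + α)) := by
        rw [heq, one_div_div]
        field_simp
        ring
      rw [← Real.log_div (ne_of_gt (hpos _)) (ne_of_gt (hpos _))]
      linarith [hmono, hlb, heq2]
    · -- upper bound
      rw [← Real.exp_log hf0]
      apply Real.exp_le_exp.mpr
      rw [hlogf, Finset.mul_sum]
      apply Finset.sum_le_sum
      intro k hk
      have hktn : t ≤ k := (Finset.mem_Ico.mp hk).1
      have hk' : (|α| + 1 : ℝ) ≤ (k:ℝ) := le_trans htα (Nat.cast_le.mpr hktn)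
      have hk0 : (0:ℝ) < (k:ℝ) := by
        have := abs_nonneg α; linarith
      obtain ⟨_, h2⟩ := h k (le_trans htN hktn)
      have hr0 : 0 < a (k+1) / a k := div_pos (hpos _) (hpos _)
      have hle : a (k+1) / a k ≤ 1 + β/(k:ℝ) := by
        have : a (k+1) / a k - 1 ≤ β / (k:ℝ) := by
          rw [le_div_iff₀ hk0]
          linarith [h2, mul_comm ((k:ℝ)) (a (k+1) / a k - 1)]
        linarith
      have hb0 : (0:ℝ) < 1 + β/(k:ℝ) := lt_of_lt_of_le hr0 hle
      have hmono := Real.log_le_log hr0 hle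
      have hub := Real.log_le_sub_one_of_pos hb0
      rw [← Real.log_div (ne_of_gt (hpos _)) (ne_of_gt (hpos _))]
      have heq : β * (1/((k:ℝ) + 0)) = β/(k:ℝ) := by rw [add_zero, mul_one_div]
      linarith [hmono, hub, heq]
  -- convergence of the sandwich bounds
  have hS1 := sum_inv_shift_tendsto_aux hx (0:ℝ)
  have hS2 := sum_inv_shift_tendsto_aux hx α
  have hhi : Tendsto (fun t : ℕ => Real.exp (β * ∑ k ∈ Finset.Ico t ⌊x * (t:ℝ)⌋₊, 1/((k:ℝ) + 0)))
      atTop (𝓝 (x ^ β)) := by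
    rw [Real.rpow_def_of_pos hx0, mul_comm]
    exact (Real.continuous_exp.tendsto _).comp (hS1.const_mul β)
  have hlo : Tendsto (fun t : ℕ => Real.exp (α * ∑ k ∈ Finset.Ico t ⌊x * (t:ℝ)⌋₊, 1/((k:ℝ) + α)))
      atTop (𝓝 (x ^ α)) := by
    rw [Real.rpow_def_of_pos hx0, mul_comm]
    exact (Real.continuous_exp.tendsto _).comp (hS2.const_mul α)
  have hboundedge : IsBoundedUnder (· ≥ ·) atTop (fun t : ℕ => a ⌊x * (t:ℝ)⌋₊ / a t) :=
    ⟨0, Filter.eventually_map.mpr (Filter.Eventually.of_forall fun t =>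
      le_of_lt (div_pos (hpos _) (hpos _)))⟩
  have hboundedle : IsBoundedUnder (· ≤ ·) atTop (fun t : ℕ => a ⌊x * (t:ℝ)⌋₊ / a t) :=
    hhi.isBoundedUnder_le.mono_le (hkey.mono fun t ht => ht.2)
  constructor
  · rw [← hlo.liminf_eq]
    exact liminf_le_liminf (hkey.mono fun t ht => ht.1)
      hlo.isBoundedUnder_ge hboundedle.isCoboundedUnder_ge
  · rw [← hhi.limsup_eq]
    exact limsup_le_limsup (hkey.mono fun t ht => ht.2)
      hboundedge.isCoboundedUnder_le hhi.isBoundedUnder_le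
end

section
/- (Gauss's test) Suppose (a_n) is a sequence of positive reals with a_{n+1}/a_n = 1 + p/n + B_n/n^r for all large n, where r > 1 and (B_n) is bounded. Then a_n ∼ c·n^p for some constant c > 0. In particular ∑ a_n converges if p < −1 and diverges if p ≥ −1. -/
open Filter Topology

lemma log_est {x : ℝ} (hx : |x| ≤ 1/2) : |Real.log (1 + x) - x| ≤ 2 * x ^ 2 := by
  have h1 : |(-x)| < 1 := by rw [abs_neg]; linarith
  have key := Real.abs_log_sub_add_sum_range_le h1 1
  simp only [Finset.range_one, Finset.sum_singleton, pow_one, Nat.cast_zero, zero_add,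
    div_one, sub_neg_eq_add] at key
  have hx2 : |x| ^ (1 + 1) = x ^ 2 := sq_abs x
  have h3 : |x| ^ (1+1) / (1 - |x|) ≤ 2 * x ^ 2 := by
    rw [div_le_iff₀ (by linarith), hx2]
    nlinarith [mul_le_mul_of_nonneg_left hx (sq_nonneg x)]
  rw [abs_neg] at key
  have h4 : |Real.log (1+x) - x| = |(-x) + Real.log (1+x)| := by
    rw [neg_add_eq_sub, abs_sub_comm]
  rw [h4]
  exact key.trans h3

theorem stmt_16 (a : ℕ → ℝ) (hpos : ∀ n, 0 < a n) (p r : ℝ) (hr : 1 < r)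
    (B : ℕ → ℝ) (hB : ∃ M : ℝ, ∀ n, |B n| ≤ M)
    (h : ∀ᶠ n : ℕ in atTop, a (n + 1) / a n = 1 + p / n + B n / (n : ℝ) ^ r) :
    (∃ c : ℝ, 0 < c ∧ Tendsto (fun n : ℕ => a n / (n : ℝ) ^ p) atTop (𝓝 c)) ∧
      (p < -1 → Summable a) ∧ (-1 ≤ p → ¬ Summable a) := by
  obtain ⟨M, hM⟩ := hB
  have hM0 : 0 ≤ M := (abs_nonneg _).trans (hM 0)
  set L : ℕ → ℝ := fun n => Real.log (a n) - p * Real.log n with hLdef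
  set s : ℝ := min 2 r with hsdef
  have hs1 : 1 < s := lt_min one_lt_two hr
  set C0 : ℝ := 2 * (|p| + M) ^ 2 + 2 * |p| + M with hC0
  -- key bound
  have key : ∀ᶠ n : ℕ in atTop, |L (n+1) - L n| ≤ C0 * (n : ℝ) ^ (-s) := by
    have hbig : ∀ᶠ n : ℕ in atTop, (2 * (|p| + M) + 2 : ℝ) ≤ n :=
      tendsto_natCast_atTop_atTop.eventually_ge_atTop _
    filter_upwards [h, hbig] with n hrat hn
    have hn0 : (0:ℝ) < n := by linarith [abs_nonneg p]
    have hn1 : (1:ℝ) ≤ n := by linarith [abs_nonneg p]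
    have hn2 : (2:ℝ) ≤ n := by linarith [abs_nonneg p]
    set nn : ℝ := (n : ℝ) with hnn
    have hnnr : (0:ℝ) < nn ^ r := Real.rpow_pos_of_pos hn0 r
    set x : ℝ := p / nn + B n / nn ^ r with hx
    have hnle : nn ≤ nn ^ r := by
      calc nn = nn ^ (1:ℝ) := (Real.rpow_one nn).symm
        _ ≤ nn ^ r := Real.rpow_le_rpow_of_exponent_le hn1 hr.le
    have hxa : |x| ≤ (|p| + M) / nn := by
      calc |x| ≤ |p / nn| + |B n / nn ^ r| := abs_add_le _ _
        _ = |p| / nn + |B n| / nn ^ r := by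
            rw [abs_div, abs_div, abs_of_pos hn0, abs_of_pos hnnr]
        _ ≤ |p| / nn + M / nn :=
            add_le_add_right (div_le_div₀ hM0 (hM n) hn0 hnle) _
        _ = (|p| + M) / nn := by ring
    have hxhalf : |x| ≤ 1/2 := by
      refine hxa.trans ?_
      rw [div_le_iff₀ hn0]
      nlinarith [abs_nonneg p]
    have hyhalf : |1 / nn| ≤ 1/2 := by
      rw [abs_of_pos (by positivity), div_le_div_iff₀ hn0 (by norm_num)]
      linarith
    -- the difference equation
    have heq : L (n+1) - L n = Real.log (1 + x) - p * Real.log (1 + 1/nn) := by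
      have ha : Real.log (a (n+1)) - Real.log (a n) = Real.log (1 + x) := by
        rw [← Real.log_div (hpos _).ne' (hpos _).ne', hrat, hx]; ring_nf
      have hb : Real.log (nn + 1) - Real.log nn = Real.log (1 + 1/nn) := by
        rw [← Real.log_div (by positivity) hn0.ne']
        congr 1
        field_simp
      simp only [hLdef]
      push_cast
      linear_combination ha - p * hb
    rw [heq]
    have e1 := log_est hxhalf
    have e2 := log_est hyhalf
    have hsplit : Real.log (1 + x) - p * Real.log (1 + 1/nn)
        = (Real.log (1 + x) - x) - p * (Real.log (1 + 1/nn) - 1/nn) + B n / nn ^ r := by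
      rw [hx]; ring
    rw [hsplit]
    have hBb : |B n / nn ^ r| ≤ M / nn ^ r := by
      rw [abs_div, abs_of_pos hnnr]
      gcongr
      exact hM n
    have habs : |(Real.log (1 + x) - x) - p * (Real.log (1 + 1/nn) - 1/nn) + B n / nn ^ r|
        ≤ 2 * x ^ 2 + |p| * (2 * (1/nn) ^ 2) + M / nn ^ r := by
      calc _ ≤ |(Real.log (1 + x) - x) - p * (Real.log (1 + 1/nn) - 1/nn)| + |B n / nn ^ r| :=
            abs_add_le _ _
        _ ≤ |Real.log (1 + x) - x| + |p| * |Real.log (1 + 1/nn) - 1/nn| + |B n / nn ^ r| := by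
            have h5 := abs_sub (Real.log (1 + x) - x) (p * (Real.log (1 + 1/nn) - 1/nn))
            rw [abs_mul] at h5
            linarith
        _ ≤ 2 * x ^ 2 + |p| * (2 * (1/nn) ^ 2) + M / nn ^ r := by
            gcongr
    refine habs.trans ?_
    -- compare with nn ^ (-s)
    have h2cast : nn ^ (2:ℝ) = nn ^ 2 := by
      rw [show (2:ℝ) = ((2:ℕ):ℝ) by norm_num, Real.rpow_natCast]
    have hns : (0:ℝ) < nn ^ s := Real.rpow_pos_of_pos hn0 s
    have i1 : 1 / nn ^ 2 ≤ nn ^ (-s) := by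
      rw [Real.rpow_neg hn0.le, one_div, ← h2cast]
      exact inv_anti₀ hns (Real.rpow_le_rpow_of_exponent_le hn1 (min_le_left _ _))
    have i2 : 1 / nn ^ r ≤ nn ^ (-s) := by
      rw [Real.rpow_neg hn0.le, one_div]
      exact inv_anti₀ hns (Real.rpow_le_rpow_of_exponent_le hn1 (min_le_right _ _))
    have hx2b : x ^ 2 ≤ (|p| + M) ^ 2 * (1 / nn ^ 2) := by
      have : x ^ 2 = |x| ^ 2 := (sq_abs x).symm
      rw [this]
      calc |x| ^ 2 ≤ ((|p| + M) / nn) ^ 2 := by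
            gcongr
        _ = (|p| + M) ^ 2 * (1 / nn ^ 2) := by
            field_simp
    have t1 : 2 * x ^ 2 ≤ 2 * (|p| + M) ^ 2 * nn ^ (-s) := by
      have h6 := mul_le_mul_of_nonneg_left i1 (sq_nonneg (|p| + M))
      calc 2 * x ^ 2 ≤ 2 * ((|p| + M) ^ 2 * (1 / nn ^ 2)) := by linarith
        _ ≤ 2 * ((|p| + M) ^ 2 * nn ^ (-s)) := by linarith
        _ = 2 * (|p| + M) ^ 2 * nn ^ (-s) := by ring
    have t2 : |p| * (2 * (1/nn) ^ 2) ≤ 2 * |p| * nn ^ (-s) := by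
      have h1nn : ((1:ℝ)/nn) ^ 2 = 1 / nn ^ 2 := by
        rw [div_pow, one_pow]
      have h7 := mul_le_mul_of_nonneg_left i1 (abs_nonneg p)
      calc |p| * (2 * (1/nn) ^ 2) = 2 * (|p| * (1 / nn ^ 2)) := by rw [h1nn]; ring
        _ ≤ 2 * (|p| * nn ^ (-s)) := by linarith
        _ = 2 * |p| * nn ^ (-s) := by ring
    have t3 : M / nn ^ r ≤ M * nn ^ (-s) := by
      have h8 := mul_le_mul_of_nonneg_left i2 hM0
      calc M / nn ^ r = M * (1 / nn ^ r) := by ring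
        _ ≤ M * nn ^ (-s) := h8
    have expand : C0 * nn ^ (-s)
        = 2 * (|p| + M) ^ 2 * nn ^ (-s) + 2 * |p| * nn ^ (-s) + M * nn ^ (-s) := by
      rw [hC0]; ring
    rw [expand]
    exact add_le_add (add_le_add t1 t2) t3
  -- summability of distances, convergence of L
  have hsum : Summable (fun n => dist (L n) (L (n+1))) := by
    apply summable_of_isBigO_nat (Real.summable_nat_rpow.mpr (by linarith : -s < -1))
    rw [Asymptotics.isBigO_iff]
    refine ⟨C0, ?_⟩
    filter_upwards [key] with n hn
    rw [Real.norm_eq_abs, Real.norm_eq_abs, abs_of_nonneg dist_nonneg, Real.dist_eq,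
      abs_sub_comm, abs_of_nonneg (Real.rpow_nonneg (Nat.cast_nonneg n) _)]
    exact hn
  obtain ⟨l, hl⟩ := cauchySeq_tendsto_of_complete (cauchySeq_of_summable_dist hsum)
  -- b n → exp l
  have htend : Tendsto (fun n : ℕ => a n / (n : ℝ) ^ p) atTop (𝓝 (Real.exp l)) := by
    have h1 : Tendsto (fun n => Real.exp (L n)) atTop (𝓝 (Real.exp l)) :=
      (Real.continuous_exp.tendsto l).comp hl
    refine h1.congr' ?_
    filter_upwards [eventually_ge_atTop 1] with n hn
    have hn0 : (0:ℝ) < n := by exact_mod_cast hn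
    simp only [hLdef]
    rw [Real.exp_sub, Real.exp_log (hpos n), Real.rpow_def_of_pos hn0, mul_comm p]
  refine ⟨⟨Real.exp l, Real.exp_pos l, htend⟩, ?_, ?_⟩
  · intro hp
    apply summable_of_isBigO_nat (Real.summable_nat_rpow.mpr hp)
    rw [Asymptotics.isBigO_iff]
    refine ⟨Real.exp l + 1, ?_⟩
    have hev : ∀ᶠ n : ℕ in atTop, a n / (n:ℝ) ^ p ≤ Real.exp l + 1 :=
      htend.eventually_le_const (lt_add_one _)
    filter_upwards [hev, eventually_ge_atTop 1] with n h1 h2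
    have hn0 : (0:ℝ) < n := by exact_mod_cast h2
    have hp0 : (0:ℝ) < (n:ℝ) ^ p := Real.rpow_pos_of_pos hn0 p
    simp only [Real.norm_eq_abs]
    rw [abs_of_pos (hpos n), abs_of_pos hp0]
    rw [div_le_iff₀ hp0] at h1
    linarith
  · intro hp hsumm
    have : Summable (fun n : ℕ => (n:ℝ) ^ p) := by
      apply summable_of_isBigO_nat hsumm
      rw [Asymptotics.isBigO_iff]
      refine ⟨2 / Real.exp l, ?_⟩
      have hev : ∀ᶠ n : ℕ in atTop, Real.exp l / 2 ≤ a n / (n:ℝ) ^ p :=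
        htend.eventually_const_le (by linarith [Real.exp_pos l])
      filter_upwards [hev, eventually_ge_atTop 1] with n h1 h2
      have hn0 : (0:ℝ) < n := by exact_mod_cast h2
      have hp0 : (0:ℝ) < (n:ℝ) ^ p := Real.rpow_pos_of_pos hn0 p
      simp only [Real.norm_eq_abs]
      rw [abs_of_pos (hpos n), abs_of_pos hp0]
      rw [le_div_iff₀ hp0] at h1
      have hexp := Real.exp_pos l
      have heq2 : 2 / Real.exp l * (Real.exp l / 2 * (n:ℝ) ^ p) = (n:ℝ) ^ p := by
        field_simp
      have h9 := mul_le_mul_of_nonneg_left h1 (by positivity : (0:ℝ) ≤ 2 / Real.exp l)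
      rw [heq2] at h9
      exact h9
    exact absurd (Real.summable_nat_rpow.mp this) (not_lt.mpr hp)
end

section
/- Suppose α(n) := n(|a_{n+1}/a_n| − 1) → α, and b(n) ≥ 1 is an increasing sequence tending to infinity such that b(n)(α(n) − α) is bounded and ∑_{k≥k₀} 1/(k·b(k)) < ∞. Then |a_n| ∼ C n^α for some constant C > 0; hence ∑ |a_n| converges if and only if α < −1. -/
open Filter Topology

lemma log_approx {x : ℝ} (hx : |x| ≤ 1/2) : |Real.log (1 + x) - x| ≤ 2 * x^2 := by
  have h1 : |(-x)| < 1 := by rw [abs_neg]; linarith [abs_nonneg x]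
  have h2 := Real.abs_log_sub_add_sum_range_le h1 1
  simp [Finset.sum_range_one] at h2
  have heq : |Real.log (1 + x) - x| = |-x + Real.log (1 + x)| := by
    rw [abs_sub_comm, show x - Real.log (1+x) = -(-x + Real.log (1+x)) by ring, abs_neg]
  rw [heq]
  refine h2.trans ?_
  rw [div_le_iff₀ (by linarith [abs_nonneg x])]
  nlinarith [abs_nonneg x, sq_abs x, sq_nonneg x]

theorem stmt_17 (a : ℕ → ℝ) (hne : ∀ n, a n ≠ 0) (α : ℝ)
    (h : Tendsto (fun n : ℕ => (n : ℝ) * (|a (n + 1) / a n| - 1)) atTop (𝓝 α))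
    (b : ℕ → ℝ) (hb1 : ∀ n, 1 ≤ b n) (hbmono : Monotone b)
    (hbtop : Tendsto b atTop atTop)
    (hbdd : ∃ M : ℝ, ∀ n, |b n * ((n : ℝ) * (|a (n + 1) / a n| - 1) - α)| ≤ M)
    (hsum : Summable (fun k : ℕ => 1 / ((k : ℝ) * b k))) :
    (∃ C : ℝ, 0 < C ∧ Tendsto (fun n : ℕ => |a n| / (n : ℝ) ^ α) atTop (𝓝 C)) ∧
      (Summable (fun n => |a n|) ↔ α < -1) := by
  obtain ⟨M, hM⟩ := hbdd
  have hM0 : 0 ≤ M := le_trans (abs_nonneg _) (hM 0)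
  set ε : ℕ → ℝ := fun n => (n : ℝ) * (|a (n + 1) / a n| - 1) - α with hεdef
  have hbpos : ∀ n, (0:ℝ) < b n := fun n => lt_of_lt_of_le one_pos (hb1 n)
  have hεb : ∀ n, |ε n| ≤ M / b n := by
    intro n
    rw [le_div_iff₀ (hbpos n)]
    calc |ε n| * b n = |b n * ε n| := by
          rw [abs_mul, abs_of_pos (hbpos n)]; ring
      _ ≤ M := hM n
  have hεM : ∀ n, |ε n| ≤ M := by
    intro n
    refine (hεb n).trans ?_
    rw [div_le_iff₀ (hbpos n)]
    nlinarith [hb1 n]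
  set K : ℝ := |α| + M with hK
  have hK0 : 0 ≤ K := by positivity
  have hq : ∀ n : ℕ, 1 ≤ n → |a (n+1) / a n| = 1 + (α + ε n) / n := by
    intro n hn
    have hn0 : (n:ℝ) ≠ 0 := Nat.cast_ne_zero.2 (by omega)
    field_simp [hεdef]
    simp only [hεdef]; ring
  set c : ℕ → ℝ := fun n => Real.log |a n| - α * Real.log n with hc
  set N : ℕ := 2 * (⌈K⌉₊ + 1) with hN
  have hN2 : 2 ≤ N := by omega
  have hNK : 2 * K ≤ N := by
    have : K ≤ ⌈K⌉₊ := Nat.le_ceil K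
    push_cast [hN]
    linarith
  set d : ℕ → ℝ := fun n => M / ((n:ℝ) * b n) + (2*K^2 + 2*|α|) / (n:ℝ)^2 with hd
  have hdsum : Summable d := by
    apply Summable.add
    · exact (hsum.mul_left M).congr (fun n => mul_one_div M _)
    · exact ((Real.summable_one_div_nat_pow.2 one_lt_two).mul_left (2*K^2 + 2*|α|)).congr
        (fun n => mul_one_div _ _)
  have hinc : ∀ n, N ≤ n → |c (n+1) - c n| ≤ d n := by
    intro n hn
    have hn1 : 1 ≤ n := by omega
    have hnpos : (0:ℝ) < n := by exact_mod_cast (by omega : 0 < n)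
    have hnN : (N:ℝ) ≤ n := by exact_mod_cast hn
    have hn2 : (2:ℝ) ≤ n := by
      have : (2:ℕ) ≤ n := by omega
      exact_mod_cast this
    set x : ℝ := (α + ε n)/n with hx
    have hαε : |α + ε n| ≤ K := (abs_add_le _ _).trans (by linarith [hεM n])
    have hxK : |x| ≤ K / n := by
      rw [hx, abs_div, abs_of_pos hnpos]
      gcongr
    have hx12 : |x| ≤ 1/2 := by
      refine hxK.trans ?_
      rw [div_le_iff₀ hnpos]
      linarith
    have hinv12 : |1/(n:ℝ)| ≤ 1/2 := by
      rw [abs_of_pos (by positivity)]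
      rw [div_le_div_iff₀ hnpos (by norm_num)]
      linarith
    have hlog1 : Real.log |a (n+1)| - Real.log |a n| = Real.log (1 + x) := by
      rw [← Real.log_div (abs_ne_zero.2 (hne (n+1))) (abs_ne_zero.2 (hne n)),
        ← abs_div, hq n hn1]
    have hlog2 : Real.log ((n:ℝ)+1) - Real.log n = Real.log (1 + 1/n) := by
      rw [← Real.log_div (by positivity) (ne_of_gt hnpos)]
      congr 1
      field_simp
    have heq : c (n+1) - c n
        = (Real.log (1+x) - x) + ε n / n + (-(α * (Real.log (1+1/(n:ℝ)) - 1/n))) := by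
      simp only [hc]
      push_cast
      rw [show Real.log |a (n+1)| - α * Real.log ((n:ℝ)+1)
            - (Real.log |a n| - α * Real.log n)
          = (Real.log |a (n+1)| - Real.log |a n|)
            - α * (Real.log ((n:ℝ)+1) - Real.log n) by ring, hlog1, hlog2, hx]
      field_simp
      ring
    have h1 := log_approx hx12
    have h2 := log_approx hinv12
    have htri := abs_add_three (Real.log (1+x) - x) (ε n / n)
      (-(α * (Real.log (1+1/(n:ℝ)) - 1/n)))
    have e1 : |Real.log (1+x) - x| ≤ 2 * (K^2 / (n:ℝ)^2) := by
      refine h1.trans ?_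
      have h3 : |x|^2 ≤ (K/(n:ℝ))^2 := pow_le_pow_left₀ (abs_nonneg x) hxK 2
      have h5 : (K/(n:ℝ))^2 = K^2/(n:ℝ)^2 := div_pow K _ 2
      have h6 := sq_abs x
      linarith
    have e2 : |ε n / n| ≤ M / ((n:ℝ) * b n) := by
      rw [abs_div, abs_of_pos hnpos, div_le_div_iff₀ hnpos (mul_pos hnpos (hbpos n))]
      have h4 : |ε n| * b n ≤ M := by
        rw [← le_div_iff₀ (hbpos n)]; exact hεb n
      nlinarith [abs_nonneg (ε n), hbpos n]
    have e3 : |(-(α * (Real.log (1+1/(n:ℝ)) - 1/n)))| ≤ 2 * |α| / (n:ℝ)^2 := by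
      rw [abs_neg, abs_mul]
      have h2' : |Real.log (1+1/(n:ℝ)) - 1/n| ≤ 2 / (n:ℝ)^2 := by
        refine h2.trans (le_of_eq ?_)
        rw [div_pow, one_pow, mul_one_div]
      calc |α| * |Real.log (1+1/(n:ℝ)) - 1/n| ≤ |α| * (2/(n:ℝ)^2) :=
            mul_le_mul_of_nonneg_left h2' (abs_nonneg α)
        _ = 2 * |α| / (n:ℝ)^2 := by ring
    rw [heq, hd]
    refine htri.trans ((add_le_add (add_le_add e1 e2) e3).trans (le_of_eq ?_))
    ring
  have hcconv : ∃ L, Tendsto c atTop (𝓝 L) := by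
    have hcauchy : CauchySeq (fun k => c (k + N)) := by
      apply cauchySeq_of_dist_le_of_summable (fun k => d (k + N))
      · intro k
        rw [Real.dist_eq, abs_sub_comm, Nat.succ_add]
        exact hinc (k + N) (by omega)
      · exact (summable_nat_add_iff N).2 hdsum
    obtain ⟨L, hL⟩ := cauchySeq_tendsto_of_complete hcauchy
    exact ⟨L, (tendsto_add_atTop_iff_nat N).1 hL⟩
  obtain ⟨L, hL⟩ := hcconv
  have hmain : Tendsto (fun n : ℕ => |a n| / (n : ℝ) ^ α) atTop (𝓝 (Real.exp L)) := by
    have hcomp := (Real.continuous_exp.tendsto L).comp hL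
    apply hcomp.congr'
    filter_upwards [eventually_ge_atTop 1] with n hn
    have hnpos : (0:ℝ) < n := by exact_mod_cast hn
    simp only [Function.comp, hc]
    rw [Real.exp_sub, Real.exp_log (abs_pos.2 (hne n)),
      Real.rpow_def_of_pos hnpos, mul_comm α]
  refine ⟨⟨Real.exp L, Real.exp_pos L, hmain⟩, ?_⟩
  have hO1 : (fun n : ℕ => |a n|) =O[atTop] (fun n : ℕ => (n:ℝ) ^ α) := by
    apply Asymptotics.isBigO_of_div_tendsto_nhds _ (Real.exp L) hmain
    filter_upwards [eventually_ge_atTop 1] with n hn hz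
    exact absurd hz (ne_of_gt (Real.rpow_pos_of_pos (by exact_mod_cast hn) α))
  have hO2 : (fun n : ℕ => (n:ℝ) ^ α) =O[atTop] (fun n : ℕ => |a n|) := by
    refine Asymptotics.isBigO_of_div_tendsto_nhds ?_ (Real.exp L)⁻¹ ?_
    · filter_upwards with n hz
      exact absurd hz (abs_ne_zero.2 (hne n))
    · have h2 := hmain.inv₀ (ne_of_gt (Real.exp_pos L))
      refine h2.congr (fun n => ?_)
      simp [Pi.div_apply, inv_div]
  constructor
  · intro hs
    exact Real.summable_nat_rpow.1 (summable_of_isBigO_nat hs hO2)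
  · intro hα
    exact summable_of_isBigO_nat (Real.summable_nat_rpow.2 hα) hO1
end

section
/- (Bertrand's test) Suppose α(n) := n(|a_{n+1}/a_n| − 1) → −1 and (log n)(α(n) + 1) → β. If β > −1, then ∑ |a_n| = ∞; if β < −1, then ∑ |a_n| < ∞. -/
open Filter Topology

lemma aux_not_summable : ¬ Summable (fun n : ℕ => 1 / ((n : ℝ) * Real.log n)) := by
  intro hs
  have h2 : Summable (fun n : ℕ => 1 / (((n : ℝ) + 2) * Real.log ((n : ℝ) + 2))) := by
    have := (summable_nat_add_iff 2).2 hs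
    refine this.congr fun n => ?_
    push_cast
    ring_nf
  set f : ℕ → ℝ := fun n => Real.log (Real.log ((n : ℝ) + 2)) with hf
  have hlogpos : ∀ n : ℕ, 0 < Real.log ((n : ℝ) + 2) := by
    intro n
    apply Real.log_pos
    have : (0:ℝ) ≤ (n:ℝ) := Nat.cast_nonneg n
    linarith
  have hcast : ∀ n : ℕ, ((n+1 : ℕ) : ℝ) + 2 = (n:ℝ) + 3 := by intro n; push_cast; ring
  have h3 : ∀ n : ℕ, (0:ℝ) < Real.log ((n:ℝ) + 3) := by
    intro n; have := hlogpos (n+1); rwa [hcast n] at this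
  have hg : Summable (fun n : ℕ => f (n + 1) - f n) := by
    apply h2.of_nonneg_of_le
    · intro n
      simp only [hf, sub_nonneg, hcast n]
      apply Real.log_le_log (hlogpos n)
      apply Real.log_le_log (by positivity)
      linarith
    · intro n
      have key : f (n+1) - f n = Real.log (Real.log ((n:ℝ)+3) / Real.log ((n:ℝ)+2)) := by
        simp only [hf, hcast n]
        rw [Real.log_div (ne_of_gt (h3 n)) (ne_of_gt (hlogpos n))]
      rw [key]
      have h4 : Real.log (Real.log ((n:ℝ)+3) / Real.log ((n:ℝ)+2)) ≤
          Real.log ((n:ℝ)+3) / Real.log ((n:ℝ)+2) - 1 :=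
        Real.log_le_sub_one_of_pos (div_pos (h3 n) (hlogpos n))
      have h5 : Real.log ((n:ℝ)+3) / Real.log ((n:ℝ)+2) - 1 =
          (Real.log ((n:ℝ)+3) - Real.log ((n:ℝ)+2)) / Real.log ((n:ℝ)+2) := by
        rw [sub_div, div_self (ne_of_gt (hlogpos n))]
      have h6 : Real.log ((n:ℝ)+3) - Real.log ((n:ℝ)+2) ≤ 1 / ((n:ℝ)+2) := by
        have e1 : Real.log ((n:ℝ)+3) - Real.log ((n:ℝ)+2) = Real.log (((n:ℝ)+3)/((n:ℝ)+2)) := by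
          rw [Real.log_div (by positivity) (by positivity)]
        rw [e1]
        have h7 : Real.log (((n:ℝ)+3)/((n:ℝ)+2)) ≤ ((n:ℝ)+3)/((n:ℝ)+2) - 1 :=
          Real.log_le_sub_one_of_pos (by positivity)
        have e2 : ((n:ℝ)+3)/((n:ℝ)+2) - 1 = 1/((n:ℝ)+2) := by
          field_simp
          ring
        linarith
      calc Real.log (Real.log ((n:ℝ)+3) / Real.log ((n:ℝ)+2))
          ≤ (Real.log ((n:ℝ)+3) - Real.log ((n:ℝ)+2)) / Real.log ((n:ℝ)+2) := by rw [← h5]; exact h4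
        _ ≤ (1/((n:ℝ)+2)) / Real.log ((n:ℝ)+2) := by gcongr; exact (hlogpos n).le
        _ = 1 / (((n:ℝ)+2) * Real.log ((n:ℝ)+2)) := by rw [div_div]
  have htel : ∀ m : ℕ, ∑ k ∈ Finset.range m, (f (k+1) - f k) = f m - f 0 :=
    fun m => Finset.sum_range_sub f m
  have hlim := hg.hasSum.tendsto_sum_nat
  have hatTop : Tendsto (fun m : ℕ => f m - f 0) atTop atTop := by
    apply tendsto_atTop_add_const_right
    apply (Real.tendsto_log_atTop.comp (Real.tendsto_log_atTop.comp ?_))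
    exact tendsto_atTop_add_const_right _ _ tendsto_natCast_atTop_atTop
  have hnhds : Tendsto (fun m : ℕ => f m - f 0) atTop (𝓝 (∑' n, (f (n+1) - f n))) := by
    apply hlim.congr
    intro m; rw [htel m]
  exact not_tendsto_atTop_of_tendsto_nhds hnhds hatTop


lemma aux_tendstoK (r : ℕ → ℝ) (hrpos : ∀ n, 0 < r n) (β : ℝ)
    (h : Tendsto (fun n : ℕ => (n : ℝ) * (r n - 1)) atTop (𝓝 (-1)))
    (hβ : Tendsto (fun n : ℕ => Real.log n * ((n : ℝ) * (r n - 1) + 1)) atTop (𝓝 β)) :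
    Tendsto (fun n : ℕ => (n : ℝ) * Real.log n / r n - ((n : ℝ) + 1) * Real.log ((n : ℝ) + 1))
      atTop (𝓝 (-1 - β)) := by
  have hone : Tendsto (fun n : ℕ => 1 / (n : ℝ)) atTop (𝓝 0) := tendsto_one_div_atTop_nhds_zero_nat
  -- r n → 1
  have h4 : Tendsto r atTop (𝓝 1) := by
    have h4' : Tendsto (fun n : ℕ => 1 + ((n : ℝ) * (r n - 1)) * (1 / n)) atTop
        (𝓝 (1 + (-1) * 0)) := tendsto_const_nhds.add (h.mul hone)
    norm_num at h4'
    apply h4'.congr'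
    filter_upwards [eventually_ge_atTop 1] with n hn
    have hn0 : (n : ℝ) ≠ 0 := by positivity
    field_simp
    ring
  -- n * log(1+1/n) → 1
  have h1 : Tendsto (fun n : ℕ => (n : ℝ) * Real.log (1 + 1 / n)) atTop (𝓝 1) :=
    (Real.tendsto_mul_log_one_add_div_atTop 1).comp tendsto_natCast_atTop_atTop
  -- (n+1)/n → 1
  have hB : Tendsto (fun n : ℕ => ((n : ℝ) + 1) / n) atTop (𝓝 1) := by
    have h' : Tendsto (fun n : ℕ => 1 + 1 / (n : ℝ)) atTop (𝓝 (1 + 0)) :=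
      tendsto_const_nhds.add hone
    norm_num at h'
    apply h'.congr'
    filter_upwards [eventually_ge_atTop 1] with n hn
    have hn0 : (n : ℝ) ≠ 0 := by positivity
    field_simp
  -- log(n+1)/n → 0
  have h2 : Tendsto (fun n : ℕ => Real.log ((n : ℝ) + 1) / n) atTop (𝓝 0) := by
    have hld : Tendsto (fun x : ℝ => Real.log x / x) atTop (𝓝 0) :=
      Real.isLittleO_log_id_atTop.tendsto_div_nhds_zero
    have hA : Tendsto (fun n : ℕ => Real.log ((n : ℝ) + 1) / ((n : ℝ) + 1)) atTop (𝓝 0) :=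
      hld.comp (tendsto_atTop_add_const_right _ 1 tendsto_natCast_atTop_atTop)
    have h' : Tendsto (fun n : ℕ => (Real.log ((n : ℝ) + 1) / ((n : ℝ) + 1)) * (((n : ℝ) + 1) / n))
        atTop (𝓝 (0 * 1)) := hA.mul hB
    norm_num at h'
    apply h'.congr'
    filter_upwards [eventually_ge_atTop 1] with n hn
    have hn0 : (n : ℝ) ≠ 0 := by positivity
    have hn1 : (n : ℝ) + 1 ≠ 0 := by positivity
    field_simp
  -- log(n+1)/log n → 1
  have hC : Tendsto (fun n : ℕ => Real.log ((n : ℝ) + 1) / Real.log n) atTop (𝓝 1) := by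
    have hl1 : Tendsto (fun n : ℕ => Real.log (1 + 1 / (n : ℝ))) atTop (𝓝 0) := by
      have hc : Tendsto (fun n : ℕ => 1 + 1 / (n : ℝ)) atTop (𝓝 (1 + 0)) :=
        tendsto_const_nhds.add hone
      norm_num at hc
      have := ((Real.continuousAt_log one_ne_zero).tendsto).comp hc
      simpa [Function.comp_def] using this
    have hli : Tendsto (fun n : ℕ => (Real.log n)⁻¹) atTop (𝓝 0) :=
      (Real.tendsto_log_atTop.comp tendsto_natCast_atTop_atTop).inv_tendsto_atTop
    have h' : Tendsto (fun n : ℕ => 1 + Real.log (1 + 1 / (n : ℝ)) * (Real.log n)⁻¹) atTop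
        (𝓝 (1 + 0 * 0)) := tendsto_const_nhds.add (hl1.mul hli)
    norm_num at h'
    apply h'.congr'
    filter_upwards [eventually_ge_atTop 2] with n hn
    have hn0 : (n : ℝ) ≠ 0 := by positivity
    have hlog : (0:ℝ) < Real.log n :=
      Real.log_pos (by exact_mod_cast Nat.lt_of_lt_of_le one_lt_two hn)
    have hsum : Real.log ((n : ℝ) + 1) = Real.log n + Real.log (1 + 1 / n) := by
      rw [← Real.log_mul hn0 (by positivity)]
      congr 1
      field_simp
    rw [hsum]
    field_simp
  -- ((n+1) log(n+1))/(n log n) → 1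
  have h3 : Tendsto (fun n : ℕ => ((n : ℝ) + 1) * Real.log ((n : ℝ) + 1) / ((n : ℝ) * Real.log n))
      atTop (𝓝 1) := by
    have h' : Tendsto (fun n : ℕ => (((n : ℝ) + 1) / n) * (Real.log ((n : ℝ) + 1) / Real.log n))
        atTop (𝓝 (1 * 1)) := hB.mul hC
    norm_num at h'
    apply h'.congr fun n => by rw [div_mul_div_comm]
  -- combine
  have hmain := ((h1.neg.add h2).sub (hβ.mul h3)).div h4 one_ne_zero
  have hval : (-1 - β : ℝ) = (-(1:ℝ) + 0 - β * 1) / 1 := by norm_num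
  rw [hval]
  apply hmain.congr'
  filter_upwards [eventually_ge_atTop 2] with n hn
  simp only [Pi.div_apply]
  have hn0 : (n : ℝ) ≠ 0 := by positivity
  have hlog : (0:ℝ) < Real.log n :=
    Real.log_pos (by exact_mod_cast Nat.lt_of_lt_of_le one_lt_two hn)
  have hρ : r n ≠ 0 := (hrpos n).ne'
  have hlog1 : Real.log (1 + 1 / (n : ℝ)) = Real.log ((n : ℝ) + 1) - Real.log n := by
    rw [show (1:ℝ) + 1 / n = ((n : ℝ) + 1) / n by field_simp, Real.log_div (by positivity) hn0]
  rw [hlog1]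
  field_simp
  ring

theorem stmt_18 (a : ℕ → ℝ) (hne : ∀ n, a n ≠ 0) (β : ℝ)
    (h : Tendsto (fun n : ℕ => (n : ℝ) * (|a (n + 1) / a n| - 1)) atTop (𝓝 (-1)))
    (hβ : Tendsto
      (fun n : ℕ => Real.log n * ((n : ℝ) * (|a (n + 1) / a n| - 1) + 1))
      atTop (𝓝 β)) :
    (-1 < β → ¬ Summable (fun n => |a n|)) ∧
    (β < -1 → Summable (fun n => |a n|)) := by
  have hb : ∀ n, 0 < |a n| := fun n => abs_pos.2 (hne n)
  have hrpos : ∀ n, 0 < |a (n + 1) / a n| :=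
    fun n => abs_pos.2 (div_ne_zero (hne _) (hne _))
  have hrb : ∀ n, |a (n + 1) / a n| = |a (n + 1)| / |a n| := fun n => abs_div _ _
  have hK := aux_tendstoK (fun n => |a (n + 1) / a n|) hrpos β h hβ
  set p : ℕ → ℝ := fun n => (n : ℝ) * Real.log n * |a n| with hpdef
  have hp_nonneg : ∀ n, 0 ≤ p n := fun n =>
    mul_nonneg (mul_nonneg (Nat.cast_nonneg n) (Real.log_natCast_nonneg n)) (abs_nonneg _)
  -- key reformulation: K n * |a (n+1)| = p n - (n+1) log(n+1) |a (n+1)|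
  have hKmul : ∀ n : ℕ,
      ((n : ℝ) * Real.log n / |a (n + 1) / a n| - ((n : ℝ) + 1) * Real.log ((n : ℝ) + 1))
        * |a (n + 1)| = p n - ((n : ℝ) + 1) * Real.log ((n : ℝ) + 1) * |a (n + 1)| := by
    intro n
    rw [hrb n, hpdef]
    have h0 : |a n| ≠ 0 := (hb n).ne'
    have h1 : |a (n + 1)| ≠ 0 := (hb (n + 1)).ne'
    field_simp
  constructor
  · -- divergence case
    intro hβgt hs
    have hev := hK.eventually_lt_const (show -1 - β < 0 by linarith)
    obtain ⟨N0, hN0⟩ := eventually_atTop.1 hev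
    set N := max N0 2 with hNdef
    have hN2 : 2 ≤ N := le_max_right _ _
    have hmono : ∀ n, N ≤ n → p n ≤ p (n + 1) := by
      intro n hn
      have hKn := hN0 n (le_trans (le_max_left _ _) hn)
      have hlt := mul_lt_mul_of_pos_right hKn (hb (n + 1))
      rw [hKmul n] at hlt
      rw [zero_mul] at hlt
      have e : p (n + 1) = ((n : ℝ) + 1) * Real.log ((n : ℝ) + 1) * |a (n + 1)| := by
        simp only [hpdef]; push_cast; ring
      rw [e]
      linarith
    have hge : ∀ n, N ≤ n → p N ≤ p n := by
      intro n hn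
      induction n, hn using Nat.le_induction with
      | base => exact le_rfl
      | succ m hm ih => exact le_trans ih (hmono m hm)
    have hpN : 0 < p N := by
      have h2 : (1 : ℝ) < N := by exact_mod_cast Nat.lt_of_lt_of_le one_lt_two hN2
      exact mul_pos (mul_pos (by linarith) (Real.log_pos h2)) (hb N)
    -- comparison
    have hs' : Summable (fun k : ℕ => |a (k + N)|) := (summable_nat_add_iff (f := fun n => |a n|) N).2 hs
    have hcmp : Summable (fun k : ℕ => p N * (1 / (((k + N : ℕ) : ℝ) * Real.log ((k + N : ℕ) : ℝ)))) := by
      apply hs'.of_nonneg_of_le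
      · intro k
        have : (0:ℝ) ≤ ((k + N : ℕ) : ℝ) * Real.log ((k + N : ℕ) : ℝ) :=
          mul_nonneg (Nat.cast_nonneg _) (Real.log_natCast_nonneg _)
        positivity
      · intro k
        have hkN : N ≤ k + N := Nat.le_add_left _ _
        have hle := hge (k + N) hkN
        have hpos : (0:ℝ) < ((k + N : ℕ) : ℝ) * Real.log ((k + N : ℕ) : ℝ) := by
          have h2 : (1 : ℝ) < ((k + N : ℕ) : ℝ) := by
            exact_mod_cast Nat.lt_of_lt_of_le one_lt_two (le_trans hN2 hkN)
          exact mul_pos (by linarith) (Real.log_pos h2)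
        rw [mul_one_div]
        rw [div_le_iff₀ hpos]
        calc p N ≤ p (k + N) := hle
          _ = |a (k + N)| * (((k + N : ℕ) : ℝ) * Real.log ((k + N : ℕ) : ℝ)) := by
              simp only [hpdef]; ring
    have hsum2 : Summable (fun k : ℕ => 1 / (((k + N : ℕ) : ℝ) * Real.log ((k + N : ℕ) : ℝ))) := by
      have := hcmp.mul_left (p N)⁻¹
      refine this.congr fun k => ?_
      rw [← mul_assoc, inv_mul_cancel₀ hpN.ne', one_mul]
    exact aux_not_summable ((summable_nat_add_iff (f := fun n : ℕ => 1 / ((n : ℝ) * Real.log n)) N).1 hsum2)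
  · -- convergence case
    intro hβlt
    set δ : ℝ := (-1 - β) / 2 with hδdef
    have hδ : 0 < δ := by simp only [hδdef]; linarith
    have hev := hK.eventually_const_lt (show δ < -1 - β by simp only [hδdef]; linarith)
    obtain ⟨N0, hN0⟩ := eventually_atTop.1 hev
    set N := max N0 2 with hNdef
    have key : ∀ n, N ≤ n → δ * |a (n + 1)| ≤ p n - p (n + 1) := by
      intro n hn
      have hKn := hN0 n (le_trans (le_max_left _ _) hn)
      have hlt := mul_lt_mul_of_pos_right hKn (hb (n + 1))
      rw [hKmul n] at hlt
      have e : p (n + 1) = ((n : ℝ) + 1) * Real.log ((n : ℝ) + 1) * |a (n + 1)| := by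
        simp only [hpdef]; push_cast; ring
      rw [e]
      linarith
    have hbdd : ∀ m : ℕ, ∑ k ∈ Finset.range m, |a (N + k + 1)| ≤ p N / δ := by
      intro m
      rw [le_div_iff₀ hδ]
      have htel : ∑ k ∈ Finset.range m, (p (N + k) - p (N + (k + 1))) = p N - p (N + m) :=
        Finset.sum_range_sub' (fun i => p (N + i)) m
      have hsum_le : ∑ k ∈ Finset.range m, δ * |a (N + k + 1)| ≤ p N - p (N + m) := by
        rw [← htel]
        apply Finset.sum_le_sum
        intro k _
        have := key (N + k) (Nat.le_add_right _ _)
        have e : N + (k + 1) = N + k + 1 := by omega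
        rw [e]
        exact this
      have : ∑ k ∈ Finset.range m, δ * |a (N + k + 1)| = (∑ k ∈ Finset.range m, |a (N + k + 1)|) * δ := by
        rw [← Finset.mul_sum, mul_comm]
      rw [← this]
      have := hp_nonneg (N + m)
      linarith
    have hsum : Summable (fun k : ℕ => |a (N + k + 1)|) :=
      summable_of_sum_range_le (fun k => abs_nonneg _) hbdd
    have : Summable (fun k : ℕ => |a (k + (N + 1))|) := by
      refine hsum.congr fun k => ?_
      exact congrArg (fun m : ℕ => |a m|) (by omega : N + k + 1 = k + (N + 1))
    exact (summable_nat_add_iff (f := fun n => |a n|) (N + 1)).1 this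
end
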